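/- arXiv:math/0206232 — 3 statements merged into one kernel-verified Lean document; each statement's English description precedes it below -/
import Mathlib

section
/- For every Borel probability measure ρ on [0,1] and every θ ≥ 1, the limit z(ρ) = lim_{n→∞} Z_n(θ)^{1/n} exists and its value is independent of θ ∈ [1,∞). -/
open MeasureTheory ProbabilityTheory Filter Set
open scoped Classical ENNReal NNReal ENat

namespace OrgCrit

/-- Vertices of the rooted `b`-ary tree: finite sequences over `Fin b`,
with the root `[]`; the parent of a nonempty sequence is its `tail`
(the head being the deepest coordinate). -/
abbrev V (b : ℕ) := List (Fin b)

/-- One step of the avalanche dynamics. -/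
noncomputable def nextConf (b : ℕ) (f : V b → ℝ) : V b → ℝ := fun σ =>
  match σ with
  | [] => if 1 ≤ f [] then 0 else f []
  | _ :: l => if 1 ≤ f l then f σ + f l / (b : ℝ)
      else if 1 ≤ f σ then 0 else f σ

/-- The avalanche process `X^{(v)}(t)` started from configuration `x` with `v` added
at the root. -/
noncomputable def conf (b : ℕ) (x : V b → ℝ) (v : ℝ) : ℕ → V b → ℝ
  | 0 => fun σ => if σ = [] then x [] + v else x σ
  | t + 1 => nextConf b (conf b x v t)

/-- The avalanche set `A^{(v)}`. -/
def avalSet (b : ℕ) (x : V b → ℝ) (v : ℝ) : Set (V b) :=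
  {σ | ∃ t, conf b x v t σ = 0 ∧ ∃ s < t, conf b x v s σ ≠ 0}

/-- `x_* = sup {y ∈ [0,1] : ρ([y,1]) > 0}`. -/
noncomputable def xStar (ρ : Measure ℝ) : ℝ :=
  sSup {y : ℝ | y ∈ Set.Icc (0 : ℝ) 1 ∧ 0 < ρ (Set.Icc y 1)}

/-- `θ_b = b x_* / (b-1)`. -/
noncomputable def thetaB (b : ℕ) (ρ : Measure ℝ) : ℝ := (b : ℝ) * xStar ρ / ((b : ℝ) - 1)

/-- `Q_n^{(θ)}` built from the sequence `x` (`X_k = x k`, indexed from 1). -/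
noncomputable def Qseq (b : ℕ) (θ : ℝ) (x : ℕ → ℝ) : ℕ → ℝ
  | 0 => θ
  | n + 1 => x (n + 1) + Qseq b θ x n / (b : ℝ)

/-- `Z_n(θ) = P(Q_k^{(θ)} ≥ 1, k = 0,…,n)`. -/
noncomputable def Zfun (b : ℕ) (P : Measure (ℕ → ℝ)) (n : ℕ) (θ : ℝ) : ℝ :=
  (P {x | ∀ k ≤ n, 1 ≤ Qseq b θ x k}).toReal

/-- `Q_{n,k}^{(θ)} = Y_k + Y_{k+1}/b + … + Y_n/b^{n-k} + θ/b^{n-k+1}` (`Y_i = y i`). -/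
noncomputable def Qnk (b : ℕ) (θ : ℝ) (y : ℕ → ℝ) (n k : ℕ) : ℝ :=
  (∑ j ∈ Finset.range (n - k + 1), y (k + j) / (b : ℝ) ^ j) + θ / (b : ℝ) ^ (n - k + 1)

/-- The conditional law `P_n^{(θ)} = P( · | Q_{n,ℓ}^{(θ)} ≥ 1, ℓ = 2,…,n)`. -/
noncomputable def PnTheta (b : ℕ) (P : Measure (ℕ → ℝ)) (n : ℕ) (θ : ℝ) : Measure (ℕ → ℝ) :=
  ProbabilityTheory.cond P {y | ∀ ℓ, 2 ≤ ℓ → ℓ ≤ n → 1 ≤ Qnk b θ y n ℓ}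

/-- `Q_∞ = ∑_{k ≥ 1} Y_k b^{-(k-1)}`. -/
noncomputable def Qinf (b : ℕ) (y : ℕ → ℝ) : ℝ := ∑' k : ℕ, y (k + 1) / (b : ℝ) ^ k

/-- `Φ_b(y) = 1 - (1-y)^b`. -/
noncomputable def Phib (b : ℕ) (y : ℝ) : ℝ := 1 - (1 - y) ^ b

/-- `V_n`, the least addition at the root making the avalanche survive `n` steps. -/
noncomputable def Vmin (b : ℕ) (x : V b → ℝ) (n : ℕ) : ℝ :=
  sInf {v : ℝ | 0 < v ∧ ∀ t < n, conf b x v (t + 1) ≠ conf b x v t}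

/-- `Ψ_n(ϑ)`, the distribution function of `V_n` (with `Ψ_0 = 1_{ϑ ≥ 0}`). -/
noncomputable def Psi (b : ℕ) (P : Measure (V b → ℝ)) (n : ℕ) (ϑ : ℝ) : ℝ :=
  if n = 0 then (if 0 ≤ ϑ then 1 else 0) else (P {x | Vmin b x n ≤ ϑ}).toReal

/-- Bernoulli law on `Bool` with success probability `l`. -/
noncomputable def bern (l : ℝ) : Measure Bool :=
  ENNReal.ofReal l • Measure.dirac true + ENNReal.ofReal (1 - l) • Measure.dirac false

/-- The avalanche set `A^{(θ - X_∅)}` of the avalanche started with total value `θ`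
at the root, with the convention that it is empty whenever `θ < 1`. -/
noncomputable def avalSetTheta (b : ℕ) (x : V b → ℝ) (θ : ℝ) : Set (V b) :=
  if θ < 1 then ∅ else avalSet b x (θ - x [])

/-- `B^{(θ)}`: equal to `{∅}` if `A^{(θ-X_∅)} = ∅`, and to `{σ : m(σ) ∈ A^{(θ-X_∅)}}`
otherwise. -/
noncomputable def Bset (b : ℕ) (x : V b → ℝ) (θ : ℝ) : Set (V b) :=
  if avalSetTheta b x θ = ∅ then {([] : V b)}
  else {σ : V b | σ ≠ [] ∧ σ.tail ∈ avalSetTheta b x θ}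

/-- `B_∞(θ, λ) = P_{ρ,λ}(B^{(θ)} ∩ G ≠ ∅)`, where the first component of the coordinate
at `σ` is `X_σ` and the second one indicates whether `σ` is green. -/
noncomputable def Binfty (b : ℕ) (PJ : Measure (V b → ℝ × Bool)) (θ : ℝ) : ℝ :=
  (PJ {ω | ∃ σ ∈ Bset b (fun τ => (ω τ).1) θ, (ω σ).2 = true}).toReal

/-- The coordinates of `P` (a measure on `ℕ → ℝ`) are i.i.d. with law `ρ`. -/
def IsProjIID (ρ : Measure ℝ) (P : Measure (ℕ → ℝ)) : Prop :=
  IsProbabilityMeasure P ∧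
  iIndepFun (fun i (x : ℕ → ℝ) => x i) P ∧
  ∀ i : ℕ, Measure.map (fun x : ℕ → ℝ => x i) P = ρ

/-- The coordinates of `P` (a measure on configurations on the tree) are i.i.d. with
law `ρ`. -/
def IsTreeIID (b : ℕ) (ρ : Measure ℝ) (P : Measure (V b → ℝ)) : Prop :=
  IsProbabilityMeasure P ∧
  iIndepFun (fun σ (x : V b → ℝ) => x σ) P ∧
  ∀ σ : V b, Measure.map (fun x : V b → ℝ => x σ) P = ρ

/-- Joint law of the values and of the green sites: the coordinates are i.i.d., each with
law `ρ ⊗ Bernoulli(l)`. -/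
def IsTreeGreenIID (b : ℕ) (ρ : Measure ℝ) (l : ℝ) (P : Measure (V b → ℝ × Bool)) : Prop :=
  IsProbabilityMeasure P ∧
  iIndepFun
    (fun σ (ω : V b → ℝ × Bool) => ω σ) P ∧
  ∀ σ : V b, Measure.map (fun ω : V b → ℝ × Bool => ω σ) P = ρ.prod (bern l)

/-- `z` is the common value of `lim_n Z_n(θ)^{1/n}` over `θ ≥ 1`. -/
def IsZlim (b : ℕ) (P : Measure (ℕ → ℝ)) (z : ℝ) : Prop :=
  ∀ θ : ℝ, 1 ≤ θ →
    Tendsto (fun n : ℕ => Zfun b P n θ ^ (1 / (n : ℝ))) atTop (nhds z)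

/-- `ψ θ = lim_n Z_n(θ) z^{-n}` for all `θ ≥ 0`. -/
def IsPsiFun (b : ℕ) (P : Measure (ℕ → ℝ)) (z : ℝ) (ψ : ℝ → ℝ) : Prop :=
  ∀ θ : ℝ, 0 ≤ θ →
    Tendsto (fun n : ℕ => Zfun b P n θ / z ^ n) atTop (nhds (ψ θ))

/-- `Phat` is the limit of `P_n^{(θ)}` (tested on bounded measurable functions of
finitely many coordinates), independently of `θ ≥ 1`. -/
def IsLawQhat (b : ℕ) (P : Measure (ℕ → ℝ)) (Phat : Measure (ℕ → ℝ)) : Prop :=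
  IsProbabilityMeasure Phat ∧
  ∀ θ : ℝ, 1 ≤ θ → ∀ k : ℕ, ∀ f : (ℕ → ℝ) → ℝ, Measurable f →
    (∃ M : ℝ, ∀ y, |f y| ≤ M) →
    (∀ y y' : ℕ → ℝ, (∀ i, 1 ≤ i → i ≤ k → y i = y' i) → f y = f y') →
    Tendsto (fun n : ℕ => ∫ y, f y ∂(PnTheta b P n θ)) atTop (nhds (∫ y, f y ∂Phat))

/-- The class `M♭`: probability measures on `[0,1]`, absolutely continuous with a bounded
density w.r.t. Lebesgue measure, giving positive mass to `[1 - 1/b, 1]`. -/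
def MFlat (b : ℕ) (ρ : Measure ℝ) : Prop :=
  IsProbabilityMeasure ρ ∧ ρ ((Set.Icc (0 : ℝ) 1)ᶜ) = 0 ∧
  (∃ C : NNReal, ∀ s : Set ℝ, ρ s ≤ C * volume s) ∧
  0 < ρ (Set.Icc (1 - 1 / (b : ℝ)) 1)

/-- The defining property of `c_ρ`. -/
def IsCrho (b : ℕ) (ρ : Measure ℝ) (Phat : Measure (ℕ → ℝ)) (ψ : ℝ → ℝ) (c : ℝ) : Prop :=
  0 < c ∧
  1 / c ^ 2 = ((b : ℝ) - 1) / 2 *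
    ∫ y, (∫ x, ψ (x + Qinf b y / (b : ℝ)) ∂ρ) ^ 2
      ∂(ProbabilityTheory.cond Phat {y | 1 ≤ Qinf b y})

/-- `Q_σ^{(θ)}` on the tree: `Q_∅ = θ`, `Q_σ = X_σ + Q_{m(σ)}/b`. -/
noncomputable def treeQ (b : ℕ) (θ : ℝ) (x : V b → ℝ) : V b → ℝ
  | [] => θ
  | a :: l => x (a :: l) + treeQ b θ x l / (b : ℝ)


section Pathwise

variable {b : ℕ}

lemma qlin (hb : 1 < (b : ℝ)) (θ : ℝ) (x : ℕ → ℝ) (n : ℕ) :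
    Qseq b θ x n = Qseq b 0 x n + θ / (b : ℝ) ^ n := by
  have hb0 : (b : ℝ) ≠ 0 := by positivity
  induction n with
  | zero => simp [Qseq]
  | succ n ih =>
      simp only [Qseq, ih, pow_succ]
      field_simp
      ring

lemma qcoord (θ : ℝ) {x y : ℕ → ℝ} :
    ∀ {n : ℕ}, (∀ i, 1 ≤ i → i ≤ n → x i = y i) → Qseq b θ x n = Qseq b θ y n := by
  intro n
  induction n with
  | zero => intro _; rfl
  | succ n ih =>
      intro h
      simp only [Qseq]
      rw [ih (fun i h1 h2 => h i h1 (by omega)), h (n+1) (by omega) le_rfl]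

lemma qmono (hb : 1 < (b : ℝ)) {θ θ' : ℝ} (h : θ ≤ θ') (x : ℕ → ℝ) (n : ℕ) :
    Qseq b θ x n ≤ Qseq b θ' x n := by
  rw [qlin hb θ x n, qlin hb θ' x n]
  have : (0:ℝ) < (b:ℝ) ^ n := by positivity
  gcongr

lemma qrestart (θ : ℝ) (x : ℕ → ℝ) (o : ℕ) :
    ∀ ℓ : ℕ, Qseq b θ x (o + ℓ) = Qseq b (Qseq b θ x o) (fun i => x (o + i)) ℓ := by
  intro ℓ
  induction ℓ with
  | zero => rfl
  | succ ℓ ih =>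
      show Qseq b θ x (o + ℓ + 1) = _
      simp only [Qseq, ih]
      rfl

/-- upper bound on `Qseq b 0` when all used coordinates are `≤ c`. -/
lemma qupper0 (hb : 1 < (b : ℝ)) {c : ℝ} {x : ℕ → ℝ} :
    ∀ {n : ℕ}, (∀ i, 1 ≤ i → i ≤ n → x i ≤ c) →
      Qseq b 0 x n ≤ (c * (b : ℝ) / ((b : ℝ) - 1)) * (1 - ((b : ℝ) ^ n)⁻¹) := by
  have hb0 : (0:ℝ) < (b:ℝ) := by linarith
  have hb1 : (b:ℝ) - 1 ≠ 0 := by intro h; nlinarith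
  intro n
  induction n with
  | zero => intro _; simp [Qseq]
  | succ n ih =>
      intro h
      simp only [Qseq]
      have h1 := ih (fun i hi1 hi2 => h i hi1 (by omega))
      have h2 := h (n+1) (by omega) le_rfl
      have hpow : (0:ℝ) < (b:ℝ) ^ n := by positivity
      have key : c + (c * (b : ℝ) / ((b : ℝ) - 1)) * (1 - ((b : ℝ) ^ n)⁻¹) / (b:ℝ)
          = (c * (b : ℝ) / ((b : ℝ) - 1)) * (1 - ((b : ℝ) ^ (n+1))⁻¹) := by
        field_simp
        ring
      calc x (n+1) + Qseq b 0 x n / (b:ℝ)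
          ≤ c + (c * (b : ℝ) / ((b : ℝ) - 1)) * (1 - ((b : ℝ) ^ n)⁻¹) / (b:ℝ) := by
            gcongr
        _ = _ := key

/-- lower bound on `Qseq b 0` when all used coordinates are `≥ a`. -/
lemma qlower0 (hb : 1 < (b : ℝ)) {a : ℝ} {x : ℕ → ℝ} :
    ∀ {n : ℕ}, (∀ i, 1 ≤ i → i ≤ n → a ≤ x i) →
      (a * (b : ℝ) / ((b : ℝ) - 1)) * (1 - ((b : ℝ) ^ n)⁻¹) ≤ Qseq b 0 x n := by
  have hb0 : (0:ℝ) < (b:ℝ) := by linarith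
  have hb1 : (b:ℝ) - 1 ≠ 0 := by intro h; nlinarith
  intro n
  induction n with
  | zero => intro _; simp [Qseq]
  | succ n ih =>
      intro h
      simp only [Qseq]
      have h1 := ih (fun i hi1 hi2 => h i hi1 (by omega))
      have h2 := h (n+1) (by omega) le_rfl
      have hpow : (0:ℝ) < (b:ℝ) ^ n := by positivity
      have key : a + (a * (b : ℝ) / ((b : ℝ) - 1)) * (1 - ((b : ℝ) ^ n)⁻¹) / (b:ℝ)
          = (a * (b : ℝ) / ((b : ℝ) - 1)) * (1 - ((b : ℝ) ^ (n+1))⁻¹) := by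
        field_simp
        ring
      calc (a * (b : ℝ) / ((b : ℝ) - 1)) * (1 - ((b : ℝ) ^ (n+1))⁻¹)
          = a + (a * (b : ℝ) / ((b : ℝ) - 1)) * (1 - ((b : ℝ) ^ n)⁻¹) / (b:ℝ) := key.symm
        _ ≤ x (n+1) + Qseq b 0 x n / (b:ℝ) := by gcongr

/-- full upper bound with general start. -/
lemma qupper (hb : 1 < (b : ℝ)) {c θ : ℝ} (hc : 0 ≤ c) (hθ : 0 ≤ θ) {x : ℕ → ℝ} {n : ℕ}
    (h : ∀ i, 1 ≤ i → i ≤ n → x i ≤ c) {j : ℕ} (hj : j ≤ n) :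
    Qseq b θ x n ≤ c * (b : ℝ) / ((b : ℝ) - 1) + θ / (b : ℝ) ^ j := by
  have hb0 : (0:ℝ) < (b:ℝ) := by linarith
  rw [qlin hb]
  have h1 := qupper0 hb h
  have h2 : (0:ℝ) < (b:ℝ)^n := by positivity
  have h3 : (b:ℝ)^j ≤ (b:ℝ)^n := by
    exact pow_le_pow_right₀ (le_of_lt hb) hj
  have h4 : θ / (b:ℝ)^n ≤ θ / (b:ℝ)^j := by
    exact div_le_div_of_nonneg_left hθ (by positivity) h3
  have h5 : c * (b : ℝ) / ((b : ℝ) - 1) * (1 - ((b : ℝ) ^ n)⁻¹) ≤ c * (b : ℝ) / ((b : ℝ) - 1) := by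
    have : 0 ≤ c * (b : ℝ) / ((b : ℝ) - 1) := by
      apply div_nonneg (by positivity) (by linarith)
    nlinarith [inv_pos.mpr h2]
  linarith

/-- boost survival: if all coordinates up to `s` are `≥ a` and `A := a b/(b-1) ≥ 1`,
then the chain started at `θ ≥ 1` stays `≥ 1` up to time `s`, and at time `k` it is at least
`A - (A-1)/b^k`. -/
lemma qboost (hb : 1 < (b : ℝ)) {a θ : ℝ} (hA : 1 ≤ a * (b : ℝ) / ((b : ℝ) - 1))
    (hθ : 1 ≤ θ) {x : ℕ → ℝ} {s : ℕ} (h : ∀ i, 1 ≤ i → i ≤ s → a ≤ x i) :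
    ∀ k ≤ s, (a * (b : ℝ) / ((b : ℝ) - 1)) - ((a * (b : ℝ) / ((b : ℝ) - 1)) - 1) * ((b:ℝ)^k)⁻¹
      ≤ Qseq b θ x k ∧ 1 ≤ Qseq b θ x k := by
  intro k hk
  have hb0 : (0:ℝ) < (b:ℝ) := by linarith
  set A := a * (b : ℝ) / ((b : ℝ) - 1) with hA'
  have h1 := qlower0 hb (a := a) (x := x) (n := k) (fun i hi1 hi2 => h i hi1 (by omega))
  have h2 : A * (1 - ((b:ℝ)^k)⁻¹) + θ * ((b:ℝ)^k)⁻¹ ≤ Qseq b θ x k := by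
    rw [qlin hb]
    have : θ / (b:ℝ)^k = θ * ((b:ℝ)^k)⁻¹ := by rw [div_eq_mul_inv]
    linarith
  have hpk : (0:ℝ) < ((b:ℝ)^k)⁻¹ := by positivity
  have hpk1 : ((b:ℝ)^k)⁻¹ ≤ 1 := by
    rw [inv_le_one_iff₀]
    right
    exact one_le_pow₀ (le_of_lt hb)
  constructor
  · nlinarith
  · nlinarith

end Pathwise

section XStar

variable {ρ : Measure ℝ}

lemma rho_Icc_one (hρ : IsProbabilityMeasure ρ) (hsupp : ρ ((Set.Icc (0 : ℝ) 1)ᶜ) = 0) :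
    ρ (Set.Icc (0:ℝ) 1) = 1 := by
  have h := measure_compl (μ := ρ) (s := Set.Icc (0:ℝ) 1) measurableSet_Icc (measure_ne_top ρ _)
  rw [hsupp, measure_univ] at h
  have h2 : (1:ℝ≥0∞) ≤ ρ (Set.Icc (0:ℝ) 1) := by
    rw [eq_comm, tsub_eq_zero_iff_le] at h
    exact h
  exact le_antisymm prob_le_one h2

lemma zero_mem_SGamma (hρ : IsProbabilityMeasure ρ) (hsupp : ρ ((Set.Icc (0 : ℝ) 1)ᶜ) = 0) :
    (0:ℝ) ∈ {y : ℝ | y ∈ Set.Icc (0 : ℝ) 1 ∧ 0 < ρ (Set.Icc y 1)} := by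
  refine ⟨⟨le_rfl, zero_le_one⟩, ?_⟩
  rw [rho_Icc_one hρ hsupp]
  exact zero_lt_one

lemma bddAbove_SGamma : BddAbove {y : ℝ | y ∈ Set.Icc (0 : ℝ) 1 ∧ 0 < ρ (Set.Icc y 1)} :=
  ⟨1, fun y hy => hy.1.2⟩

lemma xStar_nonneg (hρ : IsProbabilityMeasure ρ) (hsupp : ρ ((Set.Icc (0 : ℝ) 1)ᶜ) = 0) :
    0 ≤ xStar ρ :=
  le_csSup bddAbove_SGamma (zero_mem_SGamma hρ hsupp)

lemma xStar_le_one (hρ : IsProbabilityMeasure ρ) (hsupp : ρ ((Set.Icc (0 : ℝ) 1)ᶜ) = 0) :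
    xStar ρ ≤ 1 :=
  csSup_le ⟨0, zero_mem_SGamma hρ hsupp⟩ fun y hy => hy.1.2

lemma rho_Icc_null (hρ : IsProbabilityMeasure ρ) (hsupp : ρ ((Set.Icc (0 : ℝ) 1)ᶜ) = 0)
    {y : ℝ} (hy : xStar ρ < y) : ρ (Set.Icc y 1) = 0 := by
  by_contra h
  have hpos : 0 < ρ (Set.Icc y 1) := pos_iff_ne_zero.mpr h
  have hy1 : y ≤ 1 := by
    by_contra h1
    push_neg at h1
    rw [Set.Icc_eq_empty (by linarith)] at hpos
    simp at hpos
  have hy0 : 0 ≤ y := le_trans (xStar_nonneg hρ hsupp) (le_of_lt hy)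
  have : y ∈ {y : ℝ | y ∈ Set.Icc (0 : ℝ) 1 ∧ 0 < ρ (Set.Icc y 1)} := ⟨⟨hy0, hy1⟩, hpos⟩
  have := le_csSup bddAbove_SGamma this
  exact absurd hy (not_lt.mpr this)

/-- complement of `[0, x⋆]` is `ρ`-null. -/
lemma rho_compl_null (hρ : IsProbabilityMeasure ρ) (hsupp : ρ ((Set.Icc (0 : ℝ) 1)ᶜ) = 0) :
    ρ ((Set.Icc 0 (xStar ρ))ᶜ) = 0 := by
  set xs := xStar ρ
  have hsub : (Set.Icc 0 xs)ᶜ ⊆ (Set.Icc (0:ℝ) 1)ᶜ ∪ ⋃ m : ℕ, Set.Icc (xs + 1/(m+1)) 1 := by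
    intro t ht
    simp only [Set.mem_compl_iff, Set.mem_Icc, not_and, not_le] at ht
    by_cases h01 : t ∈ Set.Icc (0:ℝ) 1
    · right
      obtain ⟨h0, h1⟩ := h01
      have hxt : xs < t := ht h0
      obtain ⟨m, hm⟩ := exists_nat_one_div_lt (show (0:ℝ) < t - xs by linarith)
      exact Set.mem_iUnion.mpr ⟨m, ⟨by push_cast; linarith, h1⟩⟩
    · left; exact h01
  refine measure_mono_null hsub (measure_union_null hsupp ?_)
  refine measure_iUnion_null fun m => ?_
  exact rho_Icc_null hρ hsupp
    (by have : (0:ℝ) < 1/((m:ℝ)+1) := by positivity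
        linarith)

lemma rho_Ici_pos (hρ : IsProbabilityMeasure ρ) (hsupp : ρ ((Set.Icc (0 : ℝ) 1)ᶜ) = 0)
    {δ : ℝ} (hδ : 0 < δ) : 0 < ρ (Set.Ici (xStar ρ - δ)) := by
  have hne : {y : ℝ | y ∈ Set.Icc (0 : ℝ) 1 ∧ 0 < ρ (Set.Icc y 1)}.Nonempty :=
    ⟨0, zero_mem_SGamma hρ hsupp⟩
  obtain ⟨y, hy, hlt⟩ := exists_lt_of_lt_csSup hne (show xStar ρ - δ < xStar ρ by linarith)
  calc (0:ℝ≥0∞) < ρ (Set.Icc y 1) := hy.2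
    _ ≤ ρ (Set.Ici (xStar ρ - δ)) := measure_mono fun t ht => le_trans (le_of_lt hlt) ht.1

end XStar

section Infra

variable {b : ℕ} {ρ : Measure ℝ} {P : Measure (ℕ → ℝ)}

/-- Event that the chain survives `n` steps. -/
def Zset (b : ℕ) (θ : ℝ) (n : ℕ) : Set (ℕ → ℝ) := {x | ∀ k ≤ n, 1 ≤ Qseq b θ x k}

/-- Shifted survival event. -/
def ZsetSh (b : ℕ) (o : ℕ) (θ : ℝ) (M : ℕ) : Set (ℕ → ℝ) :=
  {x | ∀ k ≤ M, 1 ≤ Qseq b θ (fun i => x (o + i)) k}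

/-- Block coordinate map. -/
def blockMap (o M : ℕ) : (ℕ → ℝ) → (Fin M → ℝ) := fun x t => x (o + 1 + (t : ℕ))

/-- Padding of a finite vector into a sequence (coordinates `1,…,M`). -/
def padv (M : ℕ) (y : Fin M → ℝ) : ℕ → ℝ :=
  fun i => if h : 1 ≤ i ∧ i ≤ M then y ⟨i - 1, by omega⟩ else 0

/-- Survival event in finite-dimensional form. -/
def Cset (b : ℕ) (θ : ℝ) (M : ℕ) : Set (Fin M → ℝ) := {y | ∀ k ≤ M, 1 ≤ Qseq b θ (padv M y) k}

lemma measurable_blockMap (o M : ℕ) : Measurable (blockMap o M) :=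
  measurable_pi_lambda _ fun _ => measurable_pi_apply _

lemma Qseq_padv_blockMap (θ : ℝ) (x : ℕ → ℝ) (o M : ℕ) {k : ℕ} (hk : k ≤ M) :
    Qseq b θ (padv M (blockMap o M x)) k = Qseq b θ (fun i => x (o + i)) k := by
  apply qcoord
  intro i h1 h2
  have hiM : i ≤ M := le_trans h2 hk
  have : padv M (blockMap o M x) i = blockMap o M x ⟨i - 1, by omega⟩ := by
    simp only [padv, dif_pos (And.intro h1 hiM)]
  rw [this]
  show x (o + 1 + (i - 1)) = x (o + i)
  congr 1
  omega

lemma ZsetSh_eq_preimage (o θ M) : ZsetSh b o θ M = blockMap o M ⁻¹' (Cset b θ M) := by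
  ext x
  simp only [ZsetSh, Cset, Set.mem_setOf_eq, Set.mem_preimage]
  constructor
  · intro h k hk; rw [Qseq_padv_blockMap θ x o M hk]; exact h k hk
  · intro h k hk; rw [← Qseq_padv_blockMap θ x o M hk]; exact h k hk

lemma Zset_eq_ZsetSh0 (θ : ℝ) (M : ℕ) : Zset b θ M = ZsetSh b 0 θ M := by
  ext x
  simp only [Zset, ZsetSh, Set.mem_setOf_eq]
  have : ∀ k, Qseq b θ (fun i => x (0 + i)) k = Qseq b θ x k := fun k =>
    qcoord θ (fun i _ _ => by rw [Nat.zero_add])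
  simp_rw [this]

lemma measurable_Qpadv (θ : ℝ) (M : ℕ) : ∀ k, Measurable (fun y : Fin M → ℝ => Qseq b θ (padv M y) k) := by
  intro k
  induction k with
  | zero => exact measurable_const
  | succ k ih =>
      show Measurable fun y : Fin M → ℝ => padv M y (k+1) + Qseq b θ (padv M y) k / (b:ℝ)
      apply Measurable.add
      · unfold padv
        split_ifs with h
        · exact measurable_pi_apply _
        · exact measurable_const
      · exact ih.div_const _

lemma measurableSet_Cset (θ : ℝ) (M : ℕ) : MeasurableSet (Cset b θ M) := by
  have : Cset b θ M = ⋂ (k : ℕ) (_ : k ≤ M), {y : Fin M → ℝ | 1 ≤ Qseq b θ (padv M y) k} := by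
    ext y; simp [Cset]
  rw [this]
  exact MeasurableSet.iInter fun k => MeasurableSet.iInter fun _ =>
    measurableSet_le measurable_const (measurable_Qpadv θ M k)

lemma measurableSet_ZsetSh (o θ M) : MeasurableSet (ZsetSh b o θ M) := by
  rw [ZsetSh_eq_preimage]
  exact (measurable_blockMap o M) (measurableSet_Cset θ M)

lemma measurableSet_Zset (θ : ℝ) (M : ℕ) : MeasurableSet (Zset b θ M) := by
  rw [Zset_eq_ZsetSh0]; exact measurableSet_ZsetSh 0 θ M

/-- product formula for finitely many coordinates of a block. -/
lemma prob_iInter_coords (hP : IsProjIID ρ P) (o M : ℕ) {s : Fin M → Set ℝ}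
    (hs : ∀ t, MeasurableSet (s t)) :
    P (⋂ t : Fin M, (fun x : ℕ → ℝ => x (o + 1 + (t:ℕ))) ⁻¹' s t) = ∏ t : Fin M, ρ (s t) := by
  classical
  set u : Fin M ↪ ℕ := ⟨fun t => o + 1 + (t : ℕ), by intro a c h; apply Fin.ext; simp only at h; omega⟩ with hu
  set sets' : ℕ → Set ℝ := fun i =>
    if h : ∃ t : Fin M, o + 1 + (t : ℕ) = i then s h.choose else univ with hsets'
  have hkey : ∀ t : Fin M, sets' (o + 1 + (t : ℕ)) = s t := by
    intro t
    have hex : ∃ t' : Fin M, o + 1 + (t' : ℕ) = o + 1 + (t : ℕ) := ⟨t, rfl⟩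
    have h1 : sets' (o + 1 + (t : ℕ)) = s hex.choose := by
      simp only [hsets', dif_pos hex]
    have h2 : hex.choose = t := by
      have := hex.choose_spec
      apply Fin.ext; omega
    rw [h1, h2]
  have hmain := hP.2.1.measure_inter_preimage_eq_mul (S := Finset.univ.map u) (sets := sets')
    (fun i _ => by
      simp only [hsets']
      split_ifs with h
      · exact hs h.choose
      · exact MeasurableSet.univ)
  have hinter : (⋂ i ∈ Finset.univ.map u, (fun x : ℕ → ℝ => x i) ⁻¹' sets' i)
      = ⋂ t : Fin M, (fun x : ℕ → ℝ => x (o + 1 + (t : ℕ))) ⁻¹' s t := by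
    ext x
    simp only [Set.mem_iInter, Finset.mem_map, Set.mem_preimage]
    constructor
    · intro h t
      have := h (u t) ⟨t, Finset.mem_univ t, rfl⟩
      rwa [show u t = o + 1 + (t:ℕ) from rfl, hkey t] at this
    · rintro h i ⟨t, _, rfl⟩
      rw [show u t = o + 1 + (t:ℕ) from rfl, hkey t]
      exact h t
  have hprod : (∏ i ∈ Finset.univ.map u, P ((fun x : ℕ → ℝ => x i) ⁻¹' sets' i))
      = ∏ t : Fin M, ρ (s t) := by
    rw [Finset.prod_map]
    refine Finset.prod_congr rfl fun t _ => ?_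
    rw [show u t = o + 1 + (t:ℕ) from rfl, hkey t]
    have hm := hP.2.2 (o + 1 + (t:ℕ))
    calc P ((fun x : ℕ → ℝ => x (o + 1 + (t:ℕ))) ⁻¹' s t)
        = (Measure.map (fun x : ℕ → ℝ => x (o + 1 + (t:ℕ))) P) (s t) :=
          (Measure.map_apply (measurable_pi_apply (X := fun _ : ℕ => ℝ) (o + 1 + (t:ℕ))) (hs t)).symm
      _ = ρ (s t) := by rw [hm]
  rw [hinter, hprod] at hmain
  exact hmain

/-- The law of a block of `M` consecutive coordinates is the product measure. -/
lemma map_blockMap (hρ : IsProbabilityMeasure ρ) (hP : IsProjIID ρ P) (o M : ℕ) :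
    Measure.map (blockMap o M) P = Measure.pi (fun _ : Fin M => ρ) := by
  refine (Measure.pi_eq ?_).symm
  intro s hs
  rw [Measure.map_apply (measurable_blockMap o M) (MeasurableSet.univ_pi hs)]
  have hpre : blockMap o M ⁻¹' (univ.pi s) = ⋂ t : Fin M, (fun x : ℕ → ℝ => x (o + 1 + (t:ℕ))) ⁻¹' (s t) := by
    ext x
    simp [blockMap, Set.mem_univ_pi]
  rw [hpre]
  exact prob_iInter_coords hP o M hs

lemma prob_block (hρ : IsProbabilityMeasure ρ) (hP : IsProjIID ρ P) (o M : ℕ)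
    {C : Set (Fin M → ℝ)} (hC : MeasurableSet C) :
    P (blockMap o M ⁻¹' C) = Measure.pi (fun _ : Fin M => ρ) C := by
  rw [← map_blockMap hρ hP o M, Measure.map_apply (measurable_blockMap o M) hC]

/-- Shift invariance of the survival probability. -/
lemma prob_ZsetSh (hρ : IsProbabilityMeasure ρ) (hP : IsProjIID ρ P) (o : ℕ) (θ : ℝ) (M : ℕ) :
    P (ZsetSh b o θ M) = P (Zset b θ M) := by
  rw [Zset_eq_ZsetSh0, ZsetSh_eq_preimage, ZsetSh_eq_preimage,
    prob_block hρ hP o M (measurableSet_Cset θ M), prob_block hρ hP 0 M (measurableSet_Cset θ M)]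

/-- Independence of two disjoint blocks. -/
lemma indepFun_blockMap (hP : IsProjIID ρ P) {o₁ M₁ o₂ : ℕ} (M₂ : ℕ) (h : o₁ + M₁ ≤ o₂) :
    IndepFun (blockMap o₁ M₁) (blockMap o₂ M₂) P := by
  classical
  set S : Finset ℕ := Finset.Icc (o₁+1) (o₁+M₁) with hS
  set T : Finset ℕ := Finset.Icc (o₂+1) (o₂+M₂) with hT
  have hST : Disjoint S T := by
    rw [Finset.disjoint_left]
    intro a ha hb
    rw [hS, Finset.mem_Icc] at ha
    rw [hT, Finset.mem_Icc] at hb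
    omega
  have h2 := hP.2.1.indepFun_finset S T hST (fun i => measurable_pi_apply i)
  let φ : (S → ℝ) → (Fin M₁ → ℝ) := fun y t =>
    y ⟨o₁ + 1 + (t:ℕ), by rw [hS, Finset.mem_Icc]; have := t.isLt; omega⟩
  let ψ : (T → ℝ) → (Fin M₂ → ℝ) := fun y t =>
    y ⟨o₂ + 1 + (t:ℕ), by rw [hT, Finset.mem_Icc]; have := t.isLt; omega⟩
  have hφ : Measurable φ := measurable_pi_lambda _ fun _ => measurable_pi_apply _
  have hψ : Measurable ψ := measurable_pi_lambda _ fun _ => measurable_pi_apply _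
  have := h2.comp hφ hψ
  exact this

lemma prob_inter_blocks (hP : IsProjIID ρ P) {o₁ M₁ o₂ M₂ : ℕ} (h : o₁ + M₁ ≤ o₂)
    {C₁ : Set (Fin M₁ → ℝ)} {C₂ : Set (Fin M₂ → ℝ)} (hC₁ : MeasurableSet C₁) (hC₂ : MeasurableSet C₂) :
    P (blockMap o₁ M₁ ⁻¹' C₁ ∩ blockMap o₂ M₂ ⁻¹' C₂)
      = P (blockMap o₁ M₁ ⁻¹' C₁) * P (blockMap o₂ M₂ ⁻¹' C₂) :=
  (indepFun_blockMap hP M₂ h).measure_inter_preimage_eq_mul C₁ C₂ hC₁ hC₂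

end Infra

section Core

variable {b : ℕ} {ρ : Measure ℝ} {P : Measure (ℕ → ℝ)}

/-- `θ_b`-type constant. -/
noncomputable def TbV (b : ℕ) (ρ : Measure ℝ) : ℝ := xStar ρ * (b : ℝ) / ((b : ℝ) - 1)

/-- Null set of sequences with a coordinate outside `[0, x⋆]`. -/
def NullS (xs : ℝ) : Set (ℕ → ℝ) := ⋃ i : ℕ, (fun x : ℕ → ℝ => x (i+1)) ⁻¹' (Set.Icc 0 xs)ᶜ

lemma P_NullS (hρ : IsProbabilityMeasure ρ) (hsupp : ρ ((Set.Icc (0 : ℝ) 1)ᶜ) = 0)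
    (hP : IsProjIID ρ P) : P (NullS (xStar ρ)) = 0 := by
  refine measure_iUnion_null fun i => ?_
  have h1 : P ((fun x : ℕ → ℝ => x (i+1)) ⁻¹' (Set.Icc 0 (xStar ρ))ᶜ)
      = (Measure.map (fun x : ℕ → ℝ => x (i+1)) P) ((Set.Icc 0 (xStar ρ))ᶜ) :=
    (Measure.map_apply (measurable_pi_apply (X := fun _ : ℕ => ℝ) (i+1))
      measurableSet_Icc.compl).symm
  rw [h1, hP.2.2, rho_compl_null hρ hsupp]

lemma coords_of_not_mem {xs : ℝ} {x : ℕ → ℝ} (h : x ∉ NullS xs) :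
    ∀ i, 1 ≤ i → (0 ≤ x i ∧ x i ≤ xs) := by
  intro i hi
  simp only [NullS, Set.mem_iUnion, Set.mem_preimage, Set.mem_compl_iff, not_exists,
    not_not] at h
  have := h (i - 1)
  rw [show i - 1 + 1 = i by omega] at this
  exact this

lemma Zfun_eq (b : ℕ) (P : Measure (ℕ → ℝ)) (n : ℕ) (θ : ℝ) :
    Zfun b P n θ = (P (Zset b θ n)).toReal := rfl

lemma Zfun_nonneg (b : ℕ) (P : Measure (ℕ → ℝ)) (n : ℕ) (θ : ℝ) : 0 ≤ Zfun b P n θ :=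
  ENNReal.toReal_nonneg

lemma Zfun_le_one (hPp : IsProbabilityMeasure P) (n : ℕ) (θ : ℝ) : Zfun b P n θ ≤ 1 := by
  rw [Zfun_eq]
  have h := prob_le_one (μ := P) (s := Zset b θ n)
  calc (P (Zset b θ n)).toReal ≤ (1 : ℝ≥0∞).toReal := ENNReal.toReal_mono ENNReal.one_ne_top h
    _ = 1 := by simp

lemma Zset_antitone (b : ℕ) (θ : ℝ) {n n' : ℕ} (h : n ≤ n') : Zset b θ n' ⊆ Zset b θ n :=
  fun x hx k hk => hx k (le_trans hk h)

lemma Zfun_antitone_n (hPp : IsProbabilityMeasure P) {n n' : ℕ} (h : n ≤ n') (θ : ℝ) :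
    Zfun b P n' θ ≤ Zfun b P n θ :=
  ENNReal.toReal_mono (measure_ne_top _ _) (measure_mono (Zset_antitone b θ h))

lemma Zfun_mono_theta (hb : 1 < (b:ℝ)) (hPp : IsProbabilityMeasure P) {θ θ' : ℝ}
    (h : θ ≤ θ') (n : ℕ) : Zfun b P n θ ≤ Zfun b P n θ' :=
  ENNReal.toReal_mono (measure_ne_top _ _) (measure_mono fun x hx k hk =>
    le_trans (hx k hk) (qmono hb h x k))

lemma Zfun_zero_eq_one (hPp : IsProbabilityMeasure P) {θ : ℝ} (hθ : 1 ≤ θ) :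
    Zfun b P 0 θ = 1 := by
  rw [Zfun_eq]
  have : Zset b θ 0 = univ := by
    ext x
    simp only [Zset, Set.mem_setOf_eq, Set.mem_univ, iff_true]
    intro k hk
    rw [Nat.le_zero.mp hk]
    exact hθ
  rw [this, measure_univ, ENNReal.toReal_one]

/-- supermultiplicativity at `θ = 1`. -/
lemma super (hb : 1 < (b:ℝ)) (hρ : IsProbabilityMeasure ρ) (hP : IsProjIID ρ P) (n m : ℕ) :
    Zfun b P n 1 * Zfun b P m 1 ≤ Zfun b P (n+m) 1 := by
  haveI := hP.1
  have hincl : Zset b 1 n ∩ ZsetSh b n 1 m ⊆ Zset b 1 (n+m) := by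
    rintro x ⟨h1, h2⟩ k hk
    by_cases hkn : k ≤ n
    · exact h1 k hkn
    · have hk' : k = n + (k - n) := by omega
      rw [hk', qrestart]
      calc (1:ℝ) ≤ Qseq b 1 (fun i => x (n+i)) (k - n) := h2 (k-n) (by omega)
        _ ≤ Qseq b (Qseq b 1 x n) (fun i => x (n+i)) (k-n) := qmono hb (h1 n le_rfl) _ _
  have hprod : P (Zset b 1 n ∩ ZsetSh b n 1 m) = P (Zset b 1 n) * P (Zset b 1 m) := by
    rw [Zset_eq_ZsetSh0, ZsetSh_eq_preimage, ZsetSh_eq_preimage (o := n),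
      prob_inter_blocks hP (by omega : 0 + n ≤ n) (measurableSet_Cset _ _) (measurableSet_Cset _ _),
      ← ZsetSh_eq_preimage, ← ZsetSh_eq_preimage, prob_ZsetSh hρ hP, prob_ZsetSh hρ hP]
  calc Zfun b P n 1 * Zfun b P m 1
      = (P (Zset b 1 n) * P (Zset b 1 m)).toReal := by
        rw [ENNReal.toReal_mul]; rfl
    _ = (P (Zset b 1 n ∩ ZsetSh b n 1 m)).toReal := by rw [hprod]
    _ ≤ Zfun b P (n+m) 1 :=
        ENNReal.toReal_mono (measure_ne_top _ _) (measure_mono hincl)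

/-- splitting inequality. -/
lemma split (hb : 1 < (b:ℝ)) (hρ : IsProbabilityMeasure ρ)
    (hsupp : ρ ((Set.Icc (0 : ℝ) 1)ᶜ) = 0) (hP : IsProjIID ρ P)
    {θ : ℝ} (hθ : 0 ≤ θ) (N M : ℕ) :
    Zfun b P (N+M) θ ≤ Zfun b P N θ * Zfun b P M (TbV b ρ + θ / (b:ℝ)^N) := by
  haveI := hP.1
  have hxs0 : 0 ≤ xStar ρ := xStar_nonneg hρ hsupp
  set θ'' := TbV b ρ + θ / (b:ℝ)^N with hθ''
  have hincl : Zset b θ (N+M) \ NullS (xStar ρ) ⊆ Zset b θ N ∩ ZsetSh b N θ'' M := by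
    rintro x ⟨hx, hnull⟩
    refine ⟨fun k hk => hx k (by omega), fun k hk => ?_⟩
    have hQN : Qseq b θ x N ≤ θ'' := by
      rw [hθ'', TbV]
      exact qupper hb hxs0 hθ (fun i h1 h2 => (coords_of_not_mem hnull i h1).2) le_rfl
    calc (1:ℝ) ≤ Qseq b (Qseq b θ x N) (fun i => x (N+i)) k := by
          rw [← qrestart]; exact hx (N+k) (by omega)
      _ ≤ Qseq b θ'' (fun i => x (N+i)) k := qmono hb hQN _ _
  have hprod : P (Zset b θ N ∩ ZsetSh b N θ'' M) = P (Zset b θ N) * P (Zset b θ'' M) := by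
    rw [Zset_eq_ZsetSh0, ZsetSh_eq_preimage, ZsetSh_eq_preimage (o := N),
      prob_inter_blocks hP (by omega : 0 + N ≤ N) (measurableSet_Cset _ _) (measurableSet_Cset _ _),
      ← ZsetSh_eq_preimage, ← ZsetSh_eq_preimage, prob_ZsetSh hρ hP, prob_ZsetSh hρ hP]
  calc Zfun b P (N+M) θ = (P (Zset b θ (N+M) \ NullS (xStar ρ))).toReal := by
        rw [Zfun_eq, measure_diff_null (P_NullS hρ hsupp hP)]
    _ ≤ (P (Zset b θ N ∩ ZsetSh b N θ'' M)).toReal :=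
        ENNReal.toReal_mono (measure_ne_top _ _) (measure_mono hincl)
    _ = Zfun b P N θ * Zfun b P M θ'' := by
        rw [hprod, ENNReal.toReal_mul]; rfl

/-- boosted survival lower bound at `θ = 1`. -/
lemma boost_low (hb : 1 < (b:ℝ)) (hρ : IsProbabilityMeasure ρ) (hP : IsProjIID ρ P)
    {a : ℝ} (hA : 1 ≤ a * (b:ℝ)/((b:ℝ)-1)) (s : ℕ) :
    (ρ (Set.Ici a)).toReal ^ s ≤ Zfun b P s 1 := by
  haveI := hP.1
  have hincl : blockMap 0 s ⁻¹' (univ.pi fun _ : Fin s => Set.Ici a) ⊆ Zset b 1 s := by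
    intro x hx k hk
    simp only [Set.mem_preimage, Set.mem_univ_pi, blockMap, Set.mem_Ici] at hx
    have hco : ∀ i, 1 ≤ i → i ≤ s → a ≤ x i := by
      intro i h1 h2
      have := hx ⟨i - 1, by omega⟩
      rwa [show 0 + 1 + ((⟨i-1, by omega⟩ : Fin s) : ℕ) = i by simp; omega] at this
    exact (qboost hb hA le_rfl hco k hk).2
  have hbox : P (blockMap 0 s ⁻¹' (univ.pi fun _ : Fin s => Set.Ici a)) = ρ (Set.Ici a) ^ s := by
    rw [prob_block hρ hP 0 s (MeasurableSet.univ_pi fun _ => measurableSet_Ici),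
      Measure.pi_pi]
    simp
  calc (ρ (Set.Ici a)).toReal ^ s = (ρ (Set.Ici a) ^ s).toReal := by
        rw [ENNReal.toReal_pow]
    _ = (P (blockMap 0 s ⁻¹' (univ.pi fun _ : Fin s => Set.Ici a))).toReal := by rw [hbox]
    _ ≤ Zfun b P s 1 := ENNReal.toReal_mono (measure_ne_top _ _) (measure_mono hincl)

/-- prepending a boosted block. -/
lemma boost_prep (hb : 1 < (b:ℝ)) (hρ : IsProbabilityMeasure ρ) (hP : IsProjIID ρ P)
    {a θ' : ℝ} (hA : 1 ≤ a * (b:ℝ)/((b:ℝ)-1)) {s M : ℕ}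
    (hτ : θ' ≤ a * (b:ℝ)/((b:ℝ)-1) - (a * (b:ℝ)/((b:ℝ)-1) - 1) * (((b:ℝ)^s)⁻¹)) :
    (ρ (Set.Ici a)).toReal ^ s * Zfun b P M θ' ≤ Zfun b P (s+M) 1 := by
  haveI := hP.1
  have hincl : (blockMap 0 s ⁻¹' (univ.pi fun _ : Fin s => Set.Ici a)) ∩ ZsetSh b s θ' M
      ⊆ Zset b 1 (s+M) := by
    rintro x ⟨hx1, hx2⟩ k hk
    simp only [Set.mem_preimage, Set.mem_univ_pi, blockMap, Set.mem_Ici] at hx1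
    have hco : ∀ i, 1 ≤ i → i ≤ s → a ≤ x i := by
      intro i h1 h2
      have := hx1 ⟨i - 1, by omega⟩
      rwa [show 0 + 1 + ((⟨i-1, by omega⟩ : Fin s) : ℕ) = i by simp; omega] at this
    by_cases hks : k ≤ s
    · exact (qboost hb hA le_rfl hco k hks).2
    · have hk' : k = s + (k - s) := by omega
      have hQs : θ' ≤ Qseq b 1 x s :=
        le_trans hτ (qboost hb hA le_rfl hco s le_rfl).1
      rw [hk', qrestart]
      calc (1:ℝ) ≤ Qseq b θ' (fun i => x (s+i)) (k - s) := hx2 (k-s) (by omega)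
        _ ≤ Qseq b (Qseq b 1 x s) (fun i => x (s+i)) (k-s) := qmono hb hQs _ _
  have hbox : P (blockMap 0 s ⁻¹' (univ.pi fun _ : Fin s => Set.Ici a)) = ρ (Set.Ici a) ^ s := by
    rw [prob_block hρ hP 0 s (MeasurableSet.univ_pi fun _ => measurableSet_Ici),
      Measure.pi_pi]
    simp
  have hprod : P ((blockMap 0 s ⁻¹' (univ.pi fun _ : Fin s => Set.Ici a)) ∩ ZsetSh b s θ' M)
      = ρ (Set.Ici a) ^ s * P (Zset b θ' M) := by
    rw [ZsetSh_eq_preimage (o := s),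
      prob_inter_blocks hP (by omega : 0 + s ≤ s)
        (MeasurableSet.univ_pi fun _ => measurableSet_Ici) (measurableSet_Cset _ _),
      hbox, ← ZsetSh_eq_preimage, prob_ZsetSh hρ hP]
  calc (ρ (Set.Ici a)).toReal ^ s * Zfun b P M θ'
      = (ρ (Set.Ici a) ^ s * P (Zset b θ' M)).toReal := by
        rw [ENNReal.toReal_mul, ENNReal.toReal_pow]; rfl
    _ = (P ((blockMap 0 s ⁻¹' (univ.pi fun _ : Fin s => Set.Ici a)) ∩ ZsetSh b s θ' M)).toReal := by
        rw [hprod]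
    _ ≤ Zfun b P (s+M) 1 := ENNReal.toReal_mono (measure_ne_top _ _) (measure_mono hincl)

/-- one-step decomposition at the top value `Tb`. -/
lemma top_step (hb : 1 < (b:ℝ)) (hρ : IsProbabilityMeasure ρ)
    (hsupp : ρ ((Set.Icc (0 : ℝ) 1)ᶜ) = 0) (hP : IsProjIID ρ P) (γ : ℝ) (n : ℕ) :
    Zfun b P (n+1) (TbV b ρ) ≤
      (ρ (Set.Ici (xStar ρ - γ))).toReal * Zfun b P n (TbV b ρ) + Zfun b P n (TbV b ρ - γ) := by
  haveI := hP.1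
  set xs := xStar ρ with hxs
  set Tb := TbV b ρ with hTb
  have hb0 : (b:ℝ) ≠ 0 := by positivity
  have hb1 : (b:ℝ) - 1 ≠ 0 := by intro h; nlinarith
  have hTbeq : xs + Tb/(b:ℝ) = Tb := by
    rw [hTb, TbV, ← hxs]
    field_simp
    ring
  set G := blockMap 0 1 ⁻¹' (univ.pi fun _ : Fin 1 => Set.Ici (xs - γ)) with hG
  have hincl : Zset b Tb (n+1) \ NullS xs ⊆ (G ∩ ZsetSh b 1 Tb n) ∪ ZsetSh b 1 (Tb - γ) n := by
    rintro x ⟨hx, hnull⟩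
    have hx1 : x 1 ≤ xs := (coords_of_not_mem hnull 1 le_rfl).2
    have hQ1 : Qseq b Tb x 1 = x 1 + Tb/(b:ℝ) := by
      show x (0+1) + Qseq b Tb x 0 / (b:ℝ) = _
      rfl
    have htail : ∀ θs : ℝ, Qseq b Tb x 1 ≤ θs → x ∈ ZsetSh b 1 θs n := by
      intro θs hθs k hk
      calc (1:ℝ) ≤ Qseq b (Qseq b Tb x 1) (fun i => x (1+i)) k := by
            rw [← qrestart]; exact hx (1+k) (by omega)
        _ ≤ Qseq b θs (fun i => x (1+i)) k := qmono hb hθs _ _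
    by_cases hbig : xs - γ ≤ x 1
    · left
      constructor
      · rw [hG]
        simp only [Set.mem_preimage, Set.mem_univ_pi, blockMap, Set.mem_Ici]
        intro t
        rw [show 0 + 1 + (t:ℕ) = 1 by have := t.isLt; omega]
        exact hbig
      · exact htail Tb (by rw [hQ1]; linarith)
    · right
      push_neg at hbig
      exact htail (Tb - γ) (by rw [hQ1]; linarith)
  have hGprob : P G = ρ (Set.Ici (xs - γ)) := by
    rw [hG, prob_block hρ hP 0 1 (MeasurableSet.univ_pi fun _ => measurableSet_Ici),
      Measure.pi_pi]
    simp
  have hGSh : P (G ∩ ZsetSh b 1 Tb n) = ρ (Set.Ici (xs - γ)) * P (Zset b Tb n) := by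
    rw [hG, ZsetSh_eq_preimage (o := 1),
      prob_inter_blocks hP (by omega : 0 + 1 ≤ 1)
        (MeasurableSet.univ_pi fun _ => measurableSet_Ici) (measurableSet_Cset _ _),
      ← hG, hGprob, ← ZsetSh_eq_preimage, prob_ZsetSh hρ hP]
  calc Zfun b P (n+1) Tb = (P (Zset b Tb (n+1) \ NullS xs)).toReal := by
        rw [Zfun_eq, measure_diff_null]
        rw [hxs]
        exact P_NullS hρ hsupp hP
    _ ≤ ((P (G ∩ ZsetSh b 1 Tb n)) + P (ZsetSh b 1 (Tb - γ) n)).toReal := by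
        apply ENNReal.toReal_mono
        · exact ENNReal.add_ne_top.mpr ⟨measure_ne_top _ _, measure_ne_top _ _⟩
        · exact le_trans (measure_mono hincl) (measure_union_le _ _)
    _ = (ρ (Set.Ici (xs - γ))).toReal * Zfun b P n Tb + Zfun b P n (Tb - γ) := by
        rw [ENNReal.toReal_add (measure_ne_top _ _) (measure_ne_top _ _), hGSh,
          ENNReal.toReal_mul, prob_ZsetSh hρ hP]
        rfl

end Core


section Cont

variable {b : ℕ} {ρ : Measure ℝ} {P : Measure (ℕ → ℝ)}

lemma qlin_shift (hb : 1 < (b:ℝ)) (T ε : ℝ) (x : ℕ → ℝ) (k : ℕ) :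
    Qseq b (T + ε) x k = Qseq b T x k + ε / (b:ℝ)^k := by
  rw [qlin hb (T + ε), qlin hb T, add_div]
  ring

/-- right-continuity of `Z_M(⋅)` at `Tb` along the sequence `Tb + θ b^{-j}`. -/
lemma cont_at_Tb (hb : 1 < (b:ℝ)) (hP : IsProjIID ρ P) {θ : ℝ} (hθ : 0 ≤ θ) (M : ℕ) (T : ℝ) :
    Tendsto (fun j : ℕ => Zfun b P M (T + θ / (b:ℝ)^j)) atTop (nhds (Zfun b P M T)) := by
  haveI := hP.1
  have hbpos : (0:ℝ) < (b:ℝ) := by linarith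
  have hanti : Antitone (fun j : ℕ => Zset b (T + θ/(b:ℝ)^j) M) := by
    intro j j' hjj' x hx k hk
    refine le_trans (hx k hk) (qmono hb ?_ x k)
    have : (b:ℝ)^j ≤ (b:ℝ)^j' := pow_le_pow_right₀ (le_of_lt hb) hjj'
    have h1 : θ / (b:ℝ)^j' ≤ θ / (b:ℝ)^j := div_le_div_of_nonneg_left hθ (by positivity) this
    linarith
  have hiInter : (⋂ j : ℕ, Zset b (T + θ/(b:ℝ)^j) M) = Zset b T M := by
    apply Set.Subset.antisymm
    · intro x hx k hk
      by_contra hcon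
      push_neg at hcon
      have hc : Qseq b T x k < 1 := hcon
      have heq : ∀ j : ℕ, (θ/(b:ℝ)^j) / (b:ℝ)^k = (θ/(b:ℝ)^k) * ((b:ℝ)⁻¹)^j := by
        intro j
        rw [inv_pow]
        rw [div_div, div_mul_eq_div_div, div_div]
        ring_nf
      have hzero : Tendsto (fun j : ℕ => (θ/(b:ℝ)^j) / (b:ℝ)^k) atTop (nhds 0) := by
        simp_rw [heq]
        have h1 : Tendsto (fun j : ℕ => ((b:ℝ)⁻¹)^j) atTop (nhds 0) :=
          tendsto_pow_atTop_nhds_zero_of_lt_one (by positivity) (by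
            rw [inv_lt_one_iff₀]; right; exact hb)
        simpa using h1.const_mul (θ/(b:ℝ)^k)
      obtain ⟨j, hj⟩ := (hzero.eventually (gt_mem_nhds (show (0:ℝ) < 1 - Qseq b T x k by linarith))).exists
      have := (Set.mem_iInter.mp hx j) k hk
      rw [qlin_shift hb T (θ/(b:ℝ)^j) x k] at this
      linarith
    · intro x hx
      refine Set.mem_iInter.mpr fun j => fun k hk => le_trans (hx k hk) (qmono hb ?_ x k)
      have : 0 ≤ θ / (b:ℝ)^j := by positivity
      linarith
  have htend := tendsto_measure_iInter_atTop (μ := P)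
    (fun j => (measurableSet_Zset _ _).nullMeasurableSet) hanti ⟨0, measure_ne_top _ _⟩
  rw [hiInter] at htend
  have := (ENNReal.tendsto_toReal (measure_ne_top P (Zset b T M))).comp htend
  exact this

end Cont


section Upper

variable {b : ℕ} {ρ : Measure ℝ} {P : Measure (ℕ → ℝ)}

lemma exists_mul_pow_inv_lt (hb : 1 < (b:ℝ)) (a : ℝ) {ε : ℝ} (hε : 0 < ε) :
    ∃ s : ℕ, a * (((b:ℝ)^s)⁻¹) < ε := by
  have h1 : Tendsto (fun s : ℕ => a * (((b:ℝ)^s)⁻¹)) atTop (nhds 0) := by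
    simp_rw [← inv_pow]
    have h2 : Tendsto (fun s : ℕ => ((b:ℝ)⁻¹)^s) atTop (nhds 0) :=
      tendsto_pow_atTop_nhds_zero_of_lt_one (by positivity)
        (by rw [inv_lt_one_iff₀]; right; exact hb)
    simpa using h2.const_mul a
  exact (h1.eventually (gt_mem_nhds hε)).exists

/-- Main upper bound: if `Z_M(Tb) < c^M` then eventually `Z_N(θ)^{1/N} ≤ c'`. -/
lemma upper_bound (hb : 1 < (b:ℝ)) (hρ : IsProbabilityMeasure ρ)
    (hsupp : ρ ((Set.Icc (0 : ℝ) 1)ᶜ) = 0) (hP : IsProjIID ρ P)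
    {θ : ℝ} (hθ : 1 ≤ θ) {c : ℝ} (hc0 : 0 < c) (hc1 : c ≤ 1) {M : ℕ} (hM : 1 ≤ M)
    (hZM : Zfun b P M (TbV b ρ) < c^M) {c' : ℝ} (hcc' : c < c') :
    ∀ᶠ N in atTop, Zfun b P N θ ^ (1/(N:ℝ)) ≤ c' := by
  haveI := hP.1
  have hθ0 : (0:ℝ) ≤ θ := le_trans zero_le_one hθ
  have hcont := cont_at_Tb hb hP hθ0 M (TbV b ρ)
  obtain ⟨j, hj⟩ := (hcont.eventually (gt_mem_nhds hZM)).exists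
  set Θ := TbV b ρ + θ/(b:ℝ)^j with hΘ
  have hstep : ∀ k : ℕ, Zfun b P (j + k*M) θ ≤ c^(k*M) := by
    intro k
    induction k with
    | zero => simpa using Zfun_le_one hP.1 j θ
    | succ k ih =>
        have h1 := split hb hρ hsupp hP hθ0 (j + k*M) M
        have h2 : Zfun b P M (TbV b ρ + θ/(b:ℝ)^(j + k*M)) ≤ Zfun b P M Θ := by
          apply Zfun_mono_theta hb hP.1
          have hple : (b:ℝ)^j ≤ (b:ℝ)^(j+k*M) := pow_le_pow_right₀ (le_of_lt hb) (by omega)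
          have := div_le_div_of_nonneg_left hθ0 (by positivity) hple
          rw [hΘ]; linarith
        calc Zfun b P (j + (k+1)*M) θ = Zfun b P ((j + k*M) + M) θ := by
              rw [show j + (k+1)*M = (j + k*M) + M by ring]
          _ ≤ Zfun b P (j+k*M) θ * Zfun b P M (TbV b ρ + θ/(b:ℝ)^(j + k*M)) := h1
          _ ≤ c^(k*M) * Zfun b P M Θ :=
              mul_le_mul ih h2 (Zfun_nonneg _ _ _ _) (by positivity)
          _ ≤ c^(k*M) * c^M := by
              have := le_of_lt hj
              have hnn : (0:ℝ) ≤ c^(k*M) := by positivity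
              nlinarith
          _ = c^((k+1)*M) := by rw [← pow_add]; ring_nf
  have hNbound : ∀ N, j + M + 1 ≤ N → Zfun b P N θ ≤ c^(N - (j+M)) := by
    intro N hN
    set k := (N - j)/M with hk
    have hdm : M * ((N - j)/M) + (N - j) % M = N - j := Nat.div_add_mod _ _
    have hmod : (N - j) % M < M := Nat.mod_lt _ (by omega)
    have hk1 : j + k*M ≤ N := by rw [hk, Nat.mul_comm]; omega
    have hk2 : N - (j+M) ≤ k*M := by rw [hk, Nat.mul_comm]; omega
    calc Zfun b P N θ ≤ Zfun b P (j + k*M) θ := Zfun_antitone_n hP.1 hk1 θ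
      _ ≤ c^(k*M) := hstep k
      _ ≤ c^(N - (j+M)) := pow_le_pow_of_le_one (le_of_lt hc0) hc1 hk2
  have he : Tendsto (fun N : ℕ => ((N - (j+M) : ℕ) : ℝ)/(N:ℝ)) atTop (nhds 1) := by
    have h1 : Tendsto (fun N : ℕ => 1 - ((j+M : ℕ):ℝ)/(N:ℝ)) atTop (nhds 1) := by
      have h2 := tendsto_const_div_atTop_nhds_zero_nat ((j+M : ℕ):ℝ)
      have h3 := h2.const_sub (1:ℝ)
      simpa using h3
    apply h1.congr'
    filter_upwards [eventually_ge_atTop (j+M+1)] with N hN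
    have hle : (j+M) ≤ N := by omega
    have hN0 : (0:ℝ) < (N:ℝ) := by
      have : 0 < N := by omega
      exact_mod_cast this
    rw [Nat.cast_sub hle, sub_div, div_self (ne_of_gt hN0)]
  have hg : Tendsto (fun N : ℕ => c ^ (((N - (j+M) : ℕ) : ℝ)/(N:ℝ))) atTop (nhds c) := by
    have h1 : Tendsto (fun N : ℕ => Real.exp (Real.log c * (((N - (j+M):ℕ):ℝ)/(N:ℝ))))
        atTop (nhds (Real.exp (Real.log c * 1))) :=
      (Real.continuous_exp.tendsto _).comp (he.const_mul (Real.log c))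
    rw [mul_one, Real.exp_log hc0] at h1
    exact h1.congr fun N => (Real.rpow_def_of_pos hc0 _).symm
  filter_upwards [hg.eventually (gt_mem_nhds hcc'), eventually_ge_atTop (j+M+1)] with N hN1 hN2
  have hZN := hNbound N hN2
  have hexp0 : (0:ℝ) ≤ 1/(N:ℝ) := by positivity
  calc Zfun b P N θ ^ (1/(N:ℝ))
      ≤ (c ^ (N - (j+M)) : ℝ) ^ (1/(N:ℝ)) :=
        Real.rpow_le_rpow (Zfun_nonneg _ _ _ _) hZN hexp0
    _ = c ^ (((N - (j+M) : ℕ):ℝ) * (1/(N:ℝ))) := by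
        rw [← Real.rpow_natCast c (N - (j+M)), ← Real.rpow_mul (le_of_lt hc0)]
    _ = c ^ (((N - (j+M) : ℕ):ℝ)/(N:ℝ)) := by rw [mul_one_div]
    _ ≤ c' := le_of_lt hN1

end Upper


section Fekete

variable {b : ℕ} {ρ : Measure ℝ} {P : Measure (ℕ → ℝ)}

lemma fekete (hb : 1 < (b:ℝ)) (hρ : IsProbabilityMeasure ρ) (hP : IsProjIID ρ P)
    (hpos : ∀ n, 0 < Zfun b P n 1) :
    ∃ z₁ : ℝ, 0 < z₁ ∧ (∀ n, Zfun b P n 1 ≤ z₁ ^ n) ∧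
      Tendsto (fun n : ℕ => Zfun b P n 1 ^ (1/(n:ℝ))) atTop (nhds z₁) := by
  haveI := hP.1
  set u : ℕ → ℝ := fun n => -Real.log (Zfun b P n 1) with hu
  have hsub : Subadditive u := by
    intro n m
    have h1 := super hb hρ hP n m
    have h2 : 0 < Zfun b P n 1 * Zfun b P m 1 := mul_pos (hpos n) (hpos m)
    have h3 : Real.log (Zfun b P n 1 * Zfun b P m 1) ≤ Real.log (Zfun b P (n+m) 1) :=
      (Real.log_le_log_iff h2 (hpos (n+m))).mpr h1
    rw [Real.log_mul (ne_of_gt (hpos n)) (ne_of_gt (hpos m))] at h3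
    simp only [hu]
    linarith
  have hub : ∀ n, 0 ≤ u n := by
    intro n
    have := Real.log_nonpos (le_of_lt (hpos n)) (Zfun_le_one hP.1 n 1)
    simp only [hu]
    linarith
  have hbdd : BddBelow (Set.range fun n : ℕ => u n / n) := by
    refine ⟨0, ?_⟩
    rintro y ⟨n, rfl⟩
    exact div_nonneg (hub n) (Nat.cast_nonneg n)
  have htend := hsub.tendsto_lim hbdd
  refine ⟨Real.exp (-hsub.lim), Real.exp_pos _, ?_, ?_⟩
  · intro n
    rcases Nat.eq_zero_or_pos n with hn | hn
    · subst hn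
      rw [Zfun_zero_eq_one hP.1 le_rfl, pow_zero]
    · have hl := hsub.lim_le_div hbdd (show n ≠ 0 by omega)
      have hn0 : (0:ℝ) < (n:ℝ) := by exact_mod_cast hn
      have h4 : hsub.lim * (n:ℝ) ≤ u n := by
        have := (le_div_iff₀ hn0).mp hl
        linarith
      have hlog : Real.log (Zfun b P n 1) ≤ (n:ℝ) * (-hsub.lim) := by
        simp only [hu] at h4
        linarith
      calc Zfun b P n 1 = Real.exp (Real.log (Zfun b P n 1)) := (Real.exp_log (hpos n)).symm
        _ ≤ Real.exp ((n:ℝ) * (-hsub.lim)) := Real.exp_le_exp.mpr hlog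
        _ = Real.exp (-hsub.lim) ^ n := by rw [← Real.exp_nat_mul]
  · have h1 : Tendsto (fun n : ℕ => Real.exp (-(u n / n))) atTop (nhds (Real.exp (-hsub.lim))) :=
      (Real.continuous_exp.tendsto _).comp htend.neg
    apply h1.congr'
    filter_upwards [eventually_ge_atTop 1] with n hn
    have hn0 : (n:ℝ) ≠ 0 := by
      have : 0 < n := hn
      positivity
    rw [Real.rpow_def_of_pos (hpos n)]
    congr 1
    simp only [hu]
    field_simp

end Fekete


section Final

variable {b : ℕ} {ρ : Measure ℝ} {P : Measure (ℕ → ℝ)}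

lemma alg_ge_one (hb : 1 < (b:ℝ)) {y : ℝ} (h : 1 - 1/(b:ℝ) ≤ y) :
    1 ≤ y * (b:ℝ)/((b:ℝ)-1) := by
  have hbm1 : (0:ℝ) < (b:ℝ)-1 := by linarith
  have hb0 : (0:ℝ) < (b:ℝ) := by linarith
  rw [le_div_iff₀ hbm1, one_mul]
  have h2 : (1 - 1/(b:ℝ)) * (b:ℝ) = (b:ℝ) - 1 := by field_simp
  nlinarith

lemma xs_gt_of_Tb_gt (hb : 1 < (b:ℝ)) (h : 1 < TbV b ρ) : 1 - 1/(b:ℝ) < xStar ρ := by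
  rw [TbV] at h
  have hbm1 : (0:ℝ) < (b:ℝ)-1 := by linarith
  have hb0 : (0:ℝ) < (b:ℝ) := by linarith
  rw [lt_div_iff₀ hbm1, one_mul] at h
  have e : 1 - 1/(b:ℝ) = ((b:ℝ)-1)/(b:ℝ) := by field_simp
  rw [e, div_lt_iff₀ hb0]
  linarith

/-- In the non-degenerate case `Tb > 1`, all `Z_n(1)` are positive. -/
lemma Zfun_pos_of_Tb_gt (hb : 1 < (b:ℝ)) (hρ : IsProbabilityMeasure ρ)
    (hsupp : ρ ((Set.Icc (0 : ℝ) 1)ᶜ) = 0) (hP : IsProjIID ρ P)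
    (hTbgt : 1 < TbV b ρ) (n : ℕ) : 0 < Zfun b P n 1 := by
  have hxsgt := xs_gt_of_Tb_gt hb hTbgt
  set d := (xStar ρ - (1 - 1/(b:ℝ)))/2 with hd
  have hdpos : 0 < d := by rw [hd]; linarith
  have hA : 1 ≤ (xStar ρ - d) * (b:ℝ)/((b:ℝ)-1) :=
    alg_ge_one hb (by rw [hd]; linarith)
  have h1 := boost_low hb hρ hP hA n
  have h2 : 0 < (ρ (Set.Ici (xStar ρ - d))).toReal :=
    ENNReal.toReal_pos (ne_of_gt (rho_Ici_pos hρ hsupp hdpos)) (measure_ne_top _ _)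
  calc (0:ℝ) < (ρ (Set.Ici (xStar ρ - d))).toReal ^ n := by positivity
    _ ≤ Zfun b P n 1 := h1

/-- STAR: for `c > z₁` there is `M` with `Z_M(Tb) < c^M`. -/
lemma star_bound (hb : 1 < (b:ℝ)) (hρ : IsProbabilityMeasure ρ)
    (hsupp : ρ ((Set.Icc (0 : ℝ) 1)ᶜ) = 0) (hP : IsProjIID ρ P)
    (hTb1 : 1 ≤ TbV b ρ) {z₁ : ℝ} (hz₁pos : 0 < z₁)
    (hZle : ∀ n, Zfun b P n 1 ≤ z₁ ^ n)
    {c : ℝ} (hc : z₁ < c) : ∃ M : ℕ, 1 ≤ M ∧ Zfun b P M (TbV b ρ) < c^M := by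
  haveI := hP.1
  rcases eq_or_lt_of_le hTb1 with hTbeq | hTbgt
  · refine ⟨1, le_rfl, ?_⟩
    rw [pow_one]
    calc Zfun b P 1 (TbV b ρ) = Zfun b P 1 1 := by rw [← hTbeq]
      _ ≤ z₁ := by have := hZle 1; rwa [pow_one] at this
      _ < c := hc
  · obtain ⟨xs, hxsdef⟩ : ∃ y, y = xStar ρ := ⟨_, rfl⟩
    have hbne : (b:ℝ) ≠ 0 := by linarith
    have hbm1 : (0:ℝ) < (b:ℝ) - 1 := by linarith
    have hxsgt : 1 - 1/(b:ℝ) < xs := by rw [hxsdef]; exact xs_gt_of_Tb_gt hb hTbgt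
    obtain ⟨δ₀, hδ₀def⟩ : ∃ y, y = xs - (1 - 1/(b:ℝ)) := ⟨_, rfl⟩
    have hδ₀ : 0 < δ₀ := by rw [hδ₀def]; linarith
    obtain ⟨γ, hγdef⟩ : ∃ y, y = min (TbV b ρ - 1) δ₀ / 2 := ⟨_, rfl⟩
    have hγpos : 0 < γ := by
      rw [hγdef]
      have h1 : 0 < min (TbV b ρ - 1) δ₀ := lt_min (by linarith) hδ₀
      linarith
    have hγδ₀ : γ < δ₀ := by
      rw [hγdef]
      have := min_le_right (TbV b ρ - 1) δ₀
      linarith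
    have hγT : 1 ≤ TbV b ρ - γ := by
      rw [hγdef]
      have := min_le_left (TbV b ρ - 1) δ₀
      linarith
    obtain ⟨δ, hδdef⟩ : ∃ y, y = γ * ((b:ℝ)-1)/(2*(b:ℝ)) := ⟨_, rfl⟩
    have hδpos : 0 < δ := by
      rw [hδdef]
      have hb0 : (0:ℝ) < (b:ℝ) := by linarith
      positivity
    have hα : (xs - δ)*(b:ℝ)/((b:ℝ)-1) = TbV b ρ - γ/2 := by
      rw [hδdef, TbV, ← hxsdef]
      field_simp
    have hA1 : 1 ≤ (xs - δ)*(b:ℝ)/((b:ℝ)-1) := by rw [hα]; linarith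
    obtain ⟨s, hs⟩ := exists_mul_pow_inv_lt hb ((xs - δ)*(b:ℝ)/((b:ℝ)-1) - 1)
      (show (0:ℝ) < γ/2 by linarith)
    have hτ : TbV b ρ - γ ≤ (xs - δ)*(b:ℝ)/((b:ℝ)-1)
        - ((xs - δ)*(b:ℝ)/((b:ℝ)-1) - 1) * (((b:ℝ)^s)⁻¹) := by
      rw [hα] at hs ⊢
      linarith
    obtain ⟨pδ, hpδdef⟩ : ∃ y, y = (ρ (Set.Ici (xs - δ))).toReal := ⟨_, rfl⟩
    have hpδpos : 0 < pδ := by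
      rw [hpδdef, hxsdef]
      exact ENNReal.toReal_pos (ne_of_gt (rho_Ici_pos hρ hsupp hδpos)) (measure_ne_top _ _)
    obtain ⟨δ', hδ'def⟩ : ∃ y, y = (γ + δ₀)/2 := ⟨_, rfl⟩
    have hγδ' : γ < δ' := by rw [hδ'def]; linarith
    have hδ'δ₀ : δ' < δ₀ := by rw [hδ'def]; linarith
    have hA1' : 1 ≤ (xs - δ')*(b:ℝ)/((b:ℝ)-1) := by
      apply alg_ge_one hb
      rw [hδ₀def] at hδ'δ₀
      linarith
    have hpδ'le : (ρ (Set.Ici (xs - δ'))).toReal ≤ z₁ := by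
      have h1 := boost_low hb hρ hP hA1' 1
      rw [pow_one] at h1
      calc (ρ (Set.Ici (xs - δ'))).toReal ≤ Zfun b P 1 1 := h1
        _ ≤ z₁^1 := hZle 1
        _ = z₁ := pow_one z₁
    have hpγle : (ρ (Set.Ici (xs - γ))).toReal ≤ z₁ := by
      refine le_trans ?_ hpδ'le
      apply ENNReal.toReal_mono (measure_ne_top _ _)
      exact measure_mono fun t ht => le_trans (show xs - δ' ≤ xs - γ by linarith) ht
    obtain ⟨D, hDdef⟩ : ∃ y, y = (z₁^s / pδ^s) / z₁ := ⟨_, rfl⟩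
    have hDpos : 0 < D := by
      rw [hDdef]
      exact div_pos (div_pos (pow_pos hz₁pos s) (pow_pos hpδpos s)) hz₁pos
    have hZTb : ∀ n, Zfun b P n (TbV b ρ) ≤ (1 + D*n) * z₁^n := by
      intro n
      induction n with
      | zero =>
          rw [Zfun_zero_eq_one hP.1 hTb1]
          norm_num
      | succ n ih =>
          push_cast
          have hpδs : (0:ℝ) < pδ^s := pow_pos hpδpos s
          have hz₁ne : z₁ ≠ 0 := ne_of_gt hz₁pos
          have h1 := top_step hb hρ hsupp hP γ n
          rw [← hxsdef] at h1
          have h2 : Zfun b P n (TbV b ρ - γ) ≤ (z₁^s/pδ^s) * z₁^n := by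
            have h3 := boost_prep hb hρ hP hA1 (θ' := TbV b ρ - γ) (s := s) (M := n) hτ
            rw [← hpδdef] at h3
            have h4 : Zfun b P (s+n) 1 ≤ z₁^(s+n) := hZle (s+n)
            have h5 : pδ^s * Zfun b P n (TbV b ρ - γ) ≤ z₁^s * z₁^n := by
              rw [← pow_add]
              exact le_trans h3 h4
            rw [div_mul_eq_mul_div, le_div_iff₀ hpδs]
            nlinarith [h5]
          calc Zfun b P (n+1) (TbV b ρ)
              ≤ (ρ (Set.Ici (xs - γ))).toReal * Zfun b P n (TbV b ρ)
                + Zfun b P n (TbV b ρ - γ) := h1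
            _ ≤ z₁ * ((1 + D*n) * z₁^n) + (z₁^s/pδ^s) * z₁^n := by
                apply add_le_add _ h2
                apply mul_le_mul hpγle ih (Zfun_nonneg _ _ _ _) (le_of_lt hz₁pos)
            _ = (1 + D*(n+1)) * z₁^(n+1) := by
                have hpδne : pδ^s ≠ 0 := ne_of_gt (pow_pos hpδpos s)
                rw [hDdef]
                field_simp
                ring
    have ht1 : z₁/c < 1 := by
      rw [div_lt_one (by linarith : (0:ℝ) < c)]
      exact hc
    have hc0 : (0:ℝ) < c := lt_trans hz₁pos hc
    have ht0 : (0:ℝ) ≤ z₁/c := div_nonneg (le_of_lt hz₁pos) (le_of_lt hc0)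
    have hsum1 : Summable (fun M : ℕ => (z₁/c)^M) := summable_geometric_of_lt_one ht0 ht1
    have hsum2 : Summable (fun M : ℕ => (M:ℝ) * (z₁/c)^M) := by
      have := summable_pow_mul_geometric_of_norm_lt_one 1 (r := z₁/c)
        (by rwa [Real.norm_eq_abs, abs_of_nonneg ht0])
      simpa using this
    have hsum : Summable (fun M : ℕ => (1 + D*(M:ℝ)) * (z₁/c)^M) := by
      have h6 := hsum1.add (hsum2.mul_left D)
      apply h6.congr
      intro M
      ring
    have htend0 := hsum.tendsto_atTop_zero
    obtain ⟨M, hM1, hMlt⟩ : ∃ M : ℕ, 1 ≤ M ∧ (1 + D*(M:ℝ)) * (z₁/c)^M < 1 := by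
      have h7 := (htend0.eventually (gt_mem_nhds one_pos)).and (eventually_ge_atTop 1)
      obtain ⟨M, hM⟩ := h7.exists
      exact ⟨M, hM.2, hM.1⟩
    refine ⟨M, hM1, ?_⟩
    have h8 := hZTb M
    have hcM : (0:ℝ) < c^M := pow_pos hc0 M
    have h9 : (1 + D*(M:ℝ))*z₁^M < c^M := by
      have h10 : ((1+D*(M:ℝ))*(z₁/c)^M)*c^M = (1+D*(M:ℝ))*z₁^M := by
        rw [div_pow, mul_assoc, div_mul_cancel₀ _ (ne_of_gt hcM)]
      rw [← h10]
      calc ((1+D*(M:ℝ))*(z₁/c)^M)*c^M < 1*c^M := mul_lt_mul_of_pos_right hMlt hcM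
        _ = c^M := one_mul _
    linarith

end Final



/-- the limit `z(ρ) = lim_n Z_n(θ)^{1/n}` exists and is independent
of `θ ≥ 1`. -/
theorem exists_common_root_limit
    (b : ℕ) (hb : 2 ≤ b) (ρ : Measure ℝ) (hρ : IsProbabilityMeasure ρ)
    (hsupp : ρ ((Set.Icc (0 : ℝ) 1)ᶜ) = 0)
    (P : Measure (ℕ → ℝ)) (hP : IsProjIID ρ P) :
    ∃ z : ℝ, IsZlim b P z := by
  haveI := hP.1
  have hB : 1 < (b:ℝ) := by
    have : (2:ℝ) ≤ (b:ℝ) := by exact_mod_cast hb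
    linarith
  have hxs0 : 0 ≤ xStar ρ := xStar_nonneg hρ hsupp
  have hTb0 : 0 ≤ TbV b ρ := by
    rw [TbV]
    have hbm1 : (0:ℝ) ≤ (b:ℝ) - 1 := by linarith
    positivity
  rcases lt_or_ge (TbV b ρ) 1 with hA | hTb1
  · -- subcritical case : all survival probabilities vanish eventually
    refine ⟨0, fun θ hθ => ?_⟩
    have hθ0 : (0:ℝ) ≤ θ := le_trans zero_le_one hθ
    obtain ⟨n₀, hn₀⟩ := exists_mul_pow_inv_lt hB θ (show (0:ℝ) < 1 - TbV b ρ by linarith)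
    have hzero : ∀ N, n₀ ≤ N → Zfun b P N θ = 0 := by
      intro N hN
      have hsubN : Zset b θ N ⊆ NullS (xStar ρ) := by
        intro x hx
        by_contra hxn
        have hcoords := coords_of_not_mem hxn
        have h1 : Qseq b θ x n₀ ≤ TbV b ρ + θ/(b:ℝ)^n₀ := by
          rw [TbV]
          exact qupper hB hxs0 hθ0 (fun i hi1 hi2 => (hcoords i hi1).2) (le_refl n₀)
        have h2 : (1:ℝ) ≤ Qseq b θ x n₀ := hx n₀ hN
        have h3 : θ/(b:ℝ)^n₀ = θ * (((b:ℝ)^n₀)⁻¹) := div_eq_mul_inv _ _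
        rw [h3] at h1
        linarith
      rw [Zfun_eq, measure_mono_null hsubN (P_NullS hρ hsupp hP)]
      simp
    have hev : ∀ᶠ N in atTop, (0:ℝ) = Zfun b P N θ ^ (1/(N:ℝ)) := by
      filter_upwards [eventually_ge_atTop (max n₀ 1)] with N hN
      have h1 : n₀ ≤ N := le_trans (le_max_left _ _) hN
      have h2 : 1 ≤ N := le_trans (le_max_right _ _) hN
      rw [hzero N h1, Real.zero_rpow]
      apply one_div_ne_zero
      have : (0:ℝ) < (N:ℝ) := by exact_mod_cast h2
      linarith
    exact Tendsto.congr' hev tendsto_const_nhds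
  · by_cases hposall : ∀ n, 0 < Zfun b P n 1
    · -- positive case
      obtain ⟨z₁, hz₁pos, hZle, hZroot⟩ := fekete hB hρ hP hposall
      refine ⟨z₁, fun θ hθ => ?_⟩
      rw [Metric.tendsto_atTop]
      intro ε hε
      have hlow : ∀ᶠ n in atTop, z₁ - ε/2 ≤ Zfun b P n θ ^ (1/(n:ℝ)) := by
        filter_upwards [hZroot.eventually (lt_mem_nhds (show z₁ - ε/2 < z₁ by linarith))]
          with n hn
        calc z₁ - ε/2 ≤ Zfun b P n 1 ^ (1/(n:ℝ)) := le_of_lt hn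
          _ ≤ Zfun b P n θ ^ (1/(n:ℝ)) :=
            Real.rpow_le_rpow (Zfun_nonneg _ _ _ _) (Zfun_mono_theta hB hP.1 hθ n)
              (by positivity)
      have hup : ∀ᶠ n in atTop, Zfun b P n θ ^ (1/(n:ℝ)) ≤ z₁ + ε/2 := by
        by_cases hcle : z₁ + ε/4 ≤ 1
        · obtain ⟨M, hM1, hZM⟩ := star_bound hB hρ hsupp hP hTb1 hz₁pos hZle
            (show z₁ < z₁ + ε/4 by linarith)
          exact upper_bound hB hρ hsupp hP hθ (show (0:ℝ) < z₁+ε/4 by linarith) hcle hM1 hZM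
            (show z₁+ε/4 < z₁+ε/2 by linarith)
        · push_neg at hcle
          apply Filter.Eventually.of_forall
          intro n
          calc Zfun b P n θ ^ (1/(n:ℝ)) ≤ 1 :=
              Real.rpow_le_one (Zfun_nonneg _ _ _ _) (Zfun_le_one hP.1 n θ) (by positivity)
            _ ≤ z₁ + ε/2 := by linarith
      obtain ⟨N, hN⟩ := Filter.eventually_atTop.mp (hlow.and hup)
      refine ⟨N, fun n hn => ?_⟩
      obtain ⟨h1, h2⟩ := hN n hn
      rw [Real.dist_eq, abs_lt]
      constructor <;> linarith
    · -- degenerate case : some `Z_{n₀}(1) = 0`, and then `Tb = 1`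
      push_neg at hposall
      obtain ⟨n₀, hn₀⟩ := hposall
      have hZn₀ : Zfun b P n₀ 1 = 0 := le_antisymm hn₀ (Zfun_nonneg _ _ _ _)
      have hTbeq : TbV b ρ = 1 := by
        by_contra hne
        have hTbgt : 1 < TbV b ρ := lt_of_le_of_ne hTb1 (Ne.symm hne)
        have := Zfun_pos_of_Tb_gt hB hρ hsupp hP hTbgt n₀
        rw [hZn₀] at this
        exact lt_irrefl 0 this
      have hn₀1 : 1 ≤ n₀ := by
        by_contra h
        push_neg at h
        have h0 : n₀ = 0 := by omega
        rw [h0, Zfun_zero_eq_one hP.1 le_rfl] at hZn₀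
        norm_num at hZn₀
      refine ⟨0, fun θ hθ => ?_⟩
      rw [Metric.tendsto_atTop]
      intro ε hε
      have hc0 : (0:ℝ) < min (ε/2) 1 := lt_min (by linarith) one_pos
      have hZM : Zfun b P n₀ (TbV b ρ) < (min (ε/2) 1 / 2)^n₀ := by
        rw [hTbeq, hZn₀]
        positivity
      have hup := upper_bound hB hρ hsupp hP hθ (show (0:ℝ) < min (ε/2) 1 / 2 by linarith)
        (by
          have := min_le_right (ε/2) (1:ℝ)
          linarith) hn₀1 hZM (show min (ε/2) 1 / 2 < min (ε/2) 1 by linarith)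
      obtain ⟨N, hN⟩ := Filter.eventually_atTop.mp hup
      refine ⟨N, fun n hn => ?_⟩
      have h1 := hN n hn
      have h2 : 0 ≤ Zfun b P n θ ^ (1/(n:ℝ)) :=
        Real.rpow_nonneg (Zfun_nonneg _ _ _ _) _
      rw [Real.dist_eq, sub_zero, abs_of_nonneg h2]
      calc Zfun b P n θ ^ (1/(n:ℝ)) ≤ min (ε/2) 1 := h1
        _ ≤ ε/2 := min_le_left _ _
        _ < ε := by linarith



end OrgCrit
end

section
/- Let ρ be a Borel probability measure on [0,1] with x_* > 1 - 1/b and ρ((1 - θ_b/b, x_*)) > 0. Then there exists ε > 0 with x_* - ε > (b-1)/b such that z(ρ) > ρ([x_* - ε, x_*]). -/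
open MeasureTheory ProbabilityTheory Filter Set
open scoped Classical ENNReal NNReal ENat

namespace OrgCrit

lemma mod_succ_step (m i : ℕ) :
    (i+1) % (m+1) = (if i % (m+1) = m then 0 else i % (m+1) + 1) := by
  have h : i % (m+1) < m + 1 := Nat.mod_lt i (Nat.succ_pos m)
  have hi : i + 1 = (m+1) * (i/(m+1)) + (i % (m+1) + 1) := by
    have := Nat.div_add_mod i (m+1); omega
  rw [hi, Nat.mul_add_mod]
  split
  · next heq => rw [heq]; simp
  · next hne => exact Nat.mod_eq_of_lt (by omega)

lemma u_ge_one (b m : ℕ) (hb : 1 ≤ b) (c : ℝ) (h1 : (1:ℝ) ≤ c + 1 / (b:ℝ)) :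
    ∀ r, (1:ℝ) ≤ (fun Q => c + Q / (b:ℝ))^[r] 1 := by
  have hb' : (0:ℝ) < b := by exact_mod_cast Nat.lt_of_lt_of_le Nat.zero_lt_one hb
  intro r
  induction r with
  | zero => rw [Function.iterate_zero_apply]
  | succ r ih =>
      have hs : (fun Q => c + Q / (b:ℝ))^[r+1] 1
          = c + (fun Q => c + Q / (b:ℝ))^[r] 1 / (b:ℝ) := by
        rw [Function.iterate_succ_apply']
      rw [hs]
      have : 1 / (b:ℝ) ≤ (fun Q => c + Q / (b:ℝ))^[r] 1 / (b:ℝ) := by gcongr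
      linarith

lemma det_aux (b m : ℕ) (hb : 1 ≤ b) (c lo : ℝ)
    (h1 : (1:ℝ) ≤ c + 1 / (b:ℝ))
    (hlo : (1:ℝ) ≤ lo + (fun Q => c + Q / (b:ℝ))^[m] 1 / (b:ℝ))
    (x : ℕ → ℝ) (n : ℕ)
    (hx : ∀ i, 1 ≤ i → i ≤ n → (c ≤ x i ∨ ((m+1) ∣ i ∧ lo ≤ x i))) :
    ∀ k ≤ n, 1 ≤ Qseq b 1 x k := by
  have hb' : (0:ℝ) < b := by exact_mod_cast Nat.lt_of_lt_of_le Nat.zero_lt_one hb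
  set u : ℕ → ℝ := fun r => (fun Q => c + Q / (b:ℝ))^[r] 1 with hu
  have hu1 : ∀ r, (1:ℝ) ≤ u r := u_ge_one b m hb c h1
  have husucc : ∀ r, u (r+1) = c + u r / (b:ℝ) := by
    intro r; simp only [hu]; rw [Function.iterate_succ_apply']
  have hu0 : u 0 = 1 := rfl
  have key : ∀ i, i ≤ n → u (i % (m+1)) ≤ Qseq b 1 x i := by
    intro i
    induction i with
    | zero => intro _; rw [Nat.zero_mod, hu0]; exact le_of_eq rfl
    | succ i ih =>
        intro h
        have IH := ih (Nat.le_of_succ_le h)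
        have hQ : Qseq b 1 x (i+1) = x (i+1) + Qseq b 1 x i / (b:ℝ) := rfl
        have hQi1 : (1:ℝ) ≤ Qseq b 1 x i := le_trans (hu1 _) IH
        have hstep := mod_succ_step m i
        rcases hx (i+1) (Nat.le_add_left 1 i) h with hc | ⟨hdvd, hlo'⟩
        · by_cases h0 : i % (m+1) = m
          · rw [hstep, if_pos h0, hu0, hQ]
            have h2 : (1:ℝ)/(b:ℝ) ≤ Qseq b 1 x i / (b:ℝ) := by gcongr
            linarith
          · rw [hstep, if_neg h0, husucc, hQ]
            have h2 : u (i % (m+1)) / (b:ℝ) ≤ Qseq b 1 x i / (b:ℝ) := by gcongr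
            linarith
        · have hmod0 : (i+1) % (m+1) = 0 := by omega
          have hmodm : i % (m+1) = m := by
            by_contra hne; rw [hstep, if_neg hne] at hmod0; omega
          rw [hstep, if_pos hmodm, hu0, hQ]
          have h2 : u m / (b:ℝ) ≤ Qseq b 1 x i / (b:ℝ) := by rw [← hmodm]; gcongr
          linarith
  intro k hk; exact le_trans (hu1 _) (key k hk)


set_option maxHeartbeats 1000000 in
/-- if `x_* > 1 - 1/b` and `ρ((1 - θ_b/b, x_*)) > 0`, then there is `ε > 0`
with `x_* - ε > (b-1)/b` and `z(ρ) > ρ([x_* - ε, x_*])`. -/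
theorem z_gt_mass_near_xStar
    (b : ℕ) (hb : 2 ≤ b) (ρ : Measure ℝ) (hρ : IsProbabilityMeasure ρ)
    (hsupp : ρ ((Set.Icc (0 : ℝ) 1)ᶜ) = 0)
    (hx : 1 - 1 / (b : ℝ) < xStar ρ)
    (hmass : 0 < ρ (Set.Ioo (1 - thetaB b ρ / (b : ℝ)) (xStar ρ)))
    (P : Measure (ℕ → ℝ)) (hP : IsProjIID ρ P)
    (z : ℝ) (hz : IsZlim b P z) :
    ∃ ε : ℝ, 0 < ε ∧ ((b : ℝ) - 1) / (b : ℝ) < xStar ρ - ε ∧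
      (ρ (Set.Icc (xStar ρ - ε) (xStar ρ))).toReal < z := by
  haveI := hρ
  haveI := hP.1
  have hb0 : (0:ℝ) < b := by positivity
  have hb1 : (1:ℝ) < b := by exact_mod_cast hb
  have hb2 : (2:ℝ) ≤ (b:ℝ) := by exact_mod_cast hb
  have hbm1 : (1:ℝ) ≤ (b:ℝ) - 1 := by linarith
  set θ := thetaB b ρ with hθ
  -- basic facts about xStar
  have hne : {y : ℝ | y ∈ Set.Icc (0:ℝ) 1 ∧ 0 < ρ (Set.Icc y 1)}.Nonempty := by
    refine ⟨0, ⟨by norm_num, ?_⟩⟩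
    have h1 : ρ (Set.Icc (0:ℝ) 1 ∪ (Set.Icc (0:ℝ) 1)ᶜ) ≤ ρ (Set.Icc (0:ℝ) 1) + ρ ((Set.Icc (0:ℝ) 1)ᶜ) :=
      measure_union_le _ _
    rw [union_compl_self, measure_univ, hsupp, add_zero] at h1
    exact lt_of_lt_of_le (by norm_num) h1
  have hxle1 : xStar ρ ≤ 1 := csSup_le hne (fun y hy => hy.1.2)
  have hq : ∀ η : ℝ, 0 < η → 0 < ρ (Set.Icc (xStar ρ - η) 1) := by
    intro η hη
    have hlt : xStar ρ - η < xStar ρ := by linarith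
    obtain ⟨y, hy, hylt⟩ := exists_lt_of_lt_csSup hne hlt
    exact lt_of_lt_of_le hy.2 (measure_mono (Icc_subset_Icc_left hylt.le))
  -- pick δ
  obtain ⟨δ, hδpos, hpδ⟩ :
      ∃ δ : ℝ, 0 < δ ∧ 0 < ρ (Set.Icc (1 - θ/(b:ℝ) + δ) (xStar ρ - δ)) := by
    by_contra hcon
    push_neg at hcon
    have hall : ∀ n : ℕ,
        ρ (Set.Icc (1 - θ/(b:ℝ) + 1/((n:ℝ)+1)) (xStar ρ - 1/((n:ℝ)+1))) = 0 := by
      intro n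
      have := hcon (1/((n:ℝ)+1)) (by positivity)
      exact le_antisymm this zero_le
    have hcover : Set.Ioo (1 - θ/(b:ℝ)) (xStar ρ) ⊆
        ⋃ n : ℕ, Set.Icc (1 - θ/(b:ℝ) + 1/((n:ℝ)+1)) (xStar ρ - 1/((n:ℝ)+1)) := by
      intro y hy
      obtain ⟨n, hn⟩ := exists_nat_one_div_lt
        (lt_min (sub_pos.mpr hy.1) (sub_pos.mpr hy.2))
      refine mem_iUnion.mpr ⟨n, ?_⟩
      have h1 := lt_of_lt_of_le hn (min_le_left _ _)
      have h2 := lt_of_lt_of_le hn (min_le_right _ _)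
      exact ⟨by linarith, by linarith⟩
    have := measure_mono_null hcover (measure_iUnion_null hall)
    rw [hθ] at this
    exact absurd this (ne_of_gt hmass)
  -- pick η
  set η : ℝ := min δ (xStar ρ - (1 - 1/(b:ℝ))) / 2 with hηdef
  have hηpos : 0 < η := by
    have : 0 < min δ (xStar ρ - (1 - 1/(b:ℝ))) := lt_min hδpos (by linarith)
    rw [hηdef]; linarith
  have hηδ : η < δ := by
    have := min_le_left δ (xStar ρ - (1 - 1/(b:ℝ))); rw [hηdef]; linarith
  have hηx : η < xStar ρ - (1 - 1/(b:ℝ)) := by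
    have := min_le_right δ (xStar ρ - (1 - 1/(b:ℝ))); rw [hηdef]; linarith
  set c : ℝ := xStar ρ - η with hcdef
  set lo : ℝ := 1 - θ/(b:ℝ) + δ with hlodef
  have h1 : (1:ℝ) ≤ c + 1/(b:ℝ) := by rw [hcdef]; linarith
  -- F and m
  set F : ℝ := c * (b:ℝ) / ((b:ℝ) - 1) with hFdef
  have hbm1' : (0:ℝ) < (b:ℝ) - 1 := by linarith
  have hcF : c + F/(b:ℝ) = F := by rw [hFdef]; field_simp; ring
  have hcgt : 1 - 1/(b:ℝ) < c := by rw [hcdef]; linarith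
  have hbinv : (b:ℝ)*(1/(b:ℝ)) = 1 := by field_simp
  have hF1 : 1 < F := by
    rw [hFdef, lt_div_iff₀ hbm1']
    nlinarith [mul_lt_mul_of_pos_left hcgt hb0]
  have hθeq : θ = (b:ℝ) * xStar ρ / ((b:ℝ) - 1) := rfl
  have hFθ : θ - (b:ℝ)*δ < F := by
    have key : F = θ - η*(b:ℝ)/((b:ℝ)-1) := by
      rw [hFdef, hθeq, hcdef]; field_simp
    have h2 : η*(b:ℝ)/((b:ℝ)-1) ≤ η*(b:ℝ) := by
      rw [div_le_iff₀ hbm1']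
      nlinarith [mul_pos hηpos hb0]
    have h3 : η*(b:ℝ) < δ*(b:ℝ) := by nlinarith
    rw [key]; linarith
  -- choose m
  have hgap : 0 < F - (θ - (b:ℝ)*δ) := by linarith
  obtain ⟨m, hm⟩ := pow_unbounded_of_one_lt ((F-1)/(F - (θ - (b:ℝ)*δ))) hb1
  set u : ℕ → ℝ := fun r => (fun Q => c + Q / (b:ℝ))^[r] 1 with hudef
  have husucc : ∀ r, u (r+1) = c + u r / (b:ℝ) := by
    intro r; simp only [hudef]; rw [Function.iterate_succ_apply']
  have hur : ∀ r, F - (F-1)/(b:ℝ)^r ≤ u r := by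
    intro r
    induction r with
    | zero => simp only [hudef, Function.iterate_zero_apply, pow_zero, div_one]; linarith
    | succ r ih =>
        rw [husucc]
        have hbr : (0:ℝ) < (b:ℝ)^r := pow_pos hb0 r
        have halg : (F - (F-1)/(b:ℝ)^r)/(b:ℝ) = F/(b:ℝ) - (F-1)/(b:ℝ)^(r+1) := by
          rw [pow_succ]; field_simp
        have h2 : (F - (F-1)/(b:ℝ)^r)/(b:ℝ) ≤ u r / (b:ℝ) := by gcongr
        rw [halg] at h2
        linarith
  have hum : θ - (b:ℝ)*δ ≤ u m := by
    have hbm : (0:ℝ) < (b:ℝ)^m := pow_pos hb0 m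
    have h2 : (F-1)/(b:ℝ)^m < F - (θ - (b:ℝ)*δ) := by
      rw [div_lt_iff₀ hbm]
      rw [div_lt_iff₀ hgap, mul_comm] at hm
      linarith
    have := hur m
    linarith
  have hlo1 : (1:ℝ) ≤ lo + u m / (b:ℝ) := by
    have halg : (θ - (b:ℝ)*δ)/(b:ℝ) = θ/(b:ℝ) - δ := by
      field_simp
    have h2 : (θ - (b:ℝ)*δ)/(b:ℝ) ≤ u m / (b:ℝ) := by gcongr
    rw [halg] at h2
    rw [hlodef]; linarith
  -- measure-theoretic part
  set Hs : Set ℝ := Set.Icc (xStar ρ - η) 1 with hHs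
  set Ls : Set ℝ := Set.Icc lo (xStar ρ - δ) with hLs
  have hHmeas : MeasurableSet Hs := measurableSet_Icc
  have hLmeas : MeasurableSet Ls := measurableSet_Icc
  have hdisj : Disjoint Hs Ls := by
    rw [Set.disjoint_left]
    intro y hyH hyL
    have h1 : xStar ρ - η ≤ y := hyH.1
    have h2 : y ≤ xStar ρ - δ := hyL.2
    linarith
  set q : ℝ := (ρ Hs).toReal with hqdef
  set p : ℝ := (ρ Ls).toReal with hpdef
  have hρfin : ∀ s : Set ℝ, ρ s ≠ ⊤ := fun s => measure_ne_top ρ s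
  have hqpos : 0 < q := ENNReal.toReal_pos (ne_of_gt (hq η hηpos)) (hρfin _)
  have hppos : 0 < p := ENNReal.toReal_pos (ne_of_gt hpδ) (hρfin _)
  have hHL : ρ (Hs ∪ Ls) = ρ Hs + ρ Ls := measure_union' hdisj hHmeas
  -- the event
  set T : ℕ → Set ℝ := fun i => if (m+1) ∣ i then Hs ∪ Ls else Hs with hT
  have hTmeas : ∀ i, MeasurableSet (T i) := by
    intro i; rw [hT]; dsimp only
    split
    · exact hHmeas.union hLmeas
    · exact hHmeas
  have hPE : ∀ k : ℕ,
      P (⋂ i ∈ Finset.Icc 1 (k*(m+1)), (fun x : ℕ → ℝ => x i) ⁻¹' T i)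
        = (ρ Hs + ρ Ls)^k * (ρ Hs)^(k*m) := by
    intro k
    rw [hP.2.1.measure_inter_preimage_eq_mul (Finset.Icc 1 (k*(m+1)))
      (fun i _ => hTmeas i)]
    have hfac : ∀ i : ℕ, P ((fun x : ℕ → ℝ => x i) ⁻¹' T i) = ρ (T i) := by
      intro i
      rw [← hP.2.2 i, Measure.map_apply (measurable_pi_apply i) (hTmeas i)]
    simp only [hfac]
    have hite : ∀ i : ℕ, ρ (T i) = if (m+1) ∣ i then ρ (Hs ∪ Ls) else ρ Hs := by
      intro i; rw [hT]; dsimp only; split <;> rfl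
    simp only [hite]
    rw [Finset.prod_ite (fun _ => ρ (Hs ∪ Ls)) (fun _ => ρ Hs),
      Finset.prod_const, Finset.prod_const]
    have hIcc : Finset.Icc 1 (k*(m+1)) = Finset.Ioc 0 (k*(m+1)) := by
      rw [← Finset.Icc_add_one_left_eq_Ioc]; rfl
    have hcard1 : ((Finset.Icc 1 (k*(m+1))).filter (fun i => (m+1) ∣ i)).card = k := by
      rw [hIcc, Nat.Ioc_filter_dvd_card_eq_div, Nat.mul_div_cancel _ (Nat.succ_pos m)]
    have hcardS : (Finset.Icc 1 (k*(m+1))).card = k*(m+1) := by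
      rw [Nat.card_Icc]; omega
    have hcard2 : ((Finset.Icc 1 (k*(m+1))).filter (fun i => ¬ (m+1) ∣ i)).card = k*m := by
      rw [Finset.filter_not, Finset.card_sdiff_of_subset (Finset.filter_subset _ _), hcard1, hcardS,
        Nat.mul_succ]
      omega
    rw [hcard1, hcard2, hHL]
  -- Z lower bound via the event
  have hsub : ∀ k : ℕ,
      (⋂ i ∈ Finset.Icc 1 (k*(m+1)), (fun x : ℕ → ℝ => x i) ⁻¹' T i)
        ⊆ {x : ℕ → ℝ | ∀ j ≤ k*(m+1), 1 ≤ Qseq b 1 x j} := by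
    intro k x hxmem
    simp only [Set.mem_iInter] at hxmem
    have hx' : ∀ i, 1 ≤ i → i ≤ k*(m+1) → (c ≤ x i ∨ ((m+1) ∣ i ∧ lo ≤ x i)) := by
      intro i hi1 hi2
      have hmem := hxmem i (Finset.mem_Icc.mpr ⟨hi1, hi2⟩)
      rw [hT] at hmem; dsimp only at hmem
      by_cases hd : (m+1) ∣ i
      · rw [if_pos hd] at hmem
        rcases hmem with hmem | hmem
        · left; rw [hcdef]; exact hmem.1
        · right; exact ⟨hd, hmem.1⟩
      · rw [if_neg hd] at hmem
        left; rw [hcdef]; exact hmem.1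
    exact det_aux b m (by omega) c lo h1 hlo1 x (k*(m+1)) hx'
  have hZlb : ∀ k : ℕ, ((q + p)^k * q^(k*m)) ≤ Zfun b P (k*(m+1)) 1 := by
    intro k
    have h2' : ((ρ Hs + ρ Ls)^k * (ρ Hs)^(k*m)).toReal = (q+p)^k * q^(k*m) := by
      rw [ENNReal.toReal_mul, ENNReal.toReal_pow, ENNReal.toReal_pow,
        ENNReal.toReal_add (hρfin _) (hρfin _)]
    have hmono := ENNReal.toReal_mono (measure_ne_top P _) (measure_mono (hsub k))
    rw [hPE k, h2'] at hmono
    exact hmono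
  set A : ℝ := q^m * (q + p) with hAdef
  have hA0 : (0:ℝ) ≤ A := by positivity
  have hc0le : ∀ j : ℕ, A ^ (1/((m:ℝ)+1))
      ≤ Zfun b P ((j+1)*(m+1)) 1 ^ (1/((((j+1)*(m+1) : ℕ)) : ℝ)) := by
    intro j
    have hAk : A ^ (j+1) = (q+p)^(j+1) * q^((j+1)*m) := by
      rw [hAdef, mul_pow, ← pow_mul, Nat.mul_comm m (j+1), mul_comm]
    have hle : A ^ (j+1) ≤ Zfun b P ((j+1)*(m+1)) 1 := by rw [hAk]; exact hZlb (j+1)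
    have h01 : (0:ℝ) ≤ 1/(((((j+1)*(m+1):ℕ))) : ℝ) := by positivity
    have hmono := Real.rpow_le_rpow (by positivity) hle h01
    have heq : ((A ^ (j+1) : ℝ)) ^ (1/(((((j+1)*(m+1):ℕ))):ℝ)) = A ^ (1/((m:ℝ)+1)) := by
      rw [← Real.rpow_natCast A (j+1), ← Real.rpow_mul hA0]
      congr 1
      have hcast : (((((j+1)*(m+1):ℕ))):ℝ) = ((j:ℝ)+1) * ((m:ℝ)+1) := by push_cast; ring
      rw [hcast]
      have hj0 : ((j:ℝ)+1) ≠ 0 := by positivity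
      have hm0 : ((m:ℝ)+1) ≠ 0 := by positivity
      push_cast
      field_simp
    rw [heq] at hmono
    exact hmono
  have hφ : Tendsto (fun j : ℕ => (j+1)*(m+1)) atTop atTop := by
    apply tendsto_atTop_mono (fun j => ?_) tendsto_id
    calc j ≤ j + 1 := Nat.le_succ j
    _ ≤ (j+1)*(m+1) := Nat.le_mul_of_pos_right _ (Nat.succ_pos m)
  have hcomp := (hz 1 le_rfl).comp hφ
  have hzge : A ^ (1/((m:ℝ)+1)) ≤ z :=
    ge_of_tendsto hcomp (Filter.Eventually.of_forall hc0le)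
  have hqlt : q < A ^ (1/((m:ℝ)+1)) := by
    have hlt : q ^ (m+1) < A := by
      rw [hAdef, pow_succ]
      exact mul_lt_mul_of_pos_left (by linarith) (pow_pos hqpos m)
    have hq1 : ((q ^ (m+1) : ℝ)) ^ (1/((m:ℝ)+1)) = q := by
      rw [← Real.rpow_natCast q (m+1), ← Real.rpow_mul hqpos.le]
      push_cast
      rw [mul_one_div, div_self (by positivity : ((m:ℝ)+1) ≠ 0), Real.rpow_one]
    calc q = ((q ^ (m+1):ℝ)) ^ (1/((m:ℝ)+1)) := hq1.symm
    _ < A ^ (1/((m:ℝ)+1)) := Real.rpow_lt_rpow (by positivity) hlt (by positivity)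
  refine ⟨η, hηpos, ?_, ?_⟩
  · have hbb : ((b:ℝ)-1)/(b:ℝ) = 1 - 1/(b:ℝ) := by
      rw [sub_div, div_self (ne_of_gt hb0)]
    rw [hbb]; linarith
  · have hsubset : Set.Icc (xStar ρ - η) (xStar ρ) ⊆ Hs := by
      rw [hHs]
      exact Set.Icc_subset_Icc_right hxle1
    have hle2 := ENNReal.toReal_mono (hρfin _) (measure_mono hsubset)
    calc (ρ (Set.Icc (xStar ρ - η) (xStar ρ))).toReal ≤ q := by rw [hqdef]; exact hle2
    _ < A ^ (1/((m:ℝ)+1)) := hqlt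
    _ ≤ z := hzge



end OrgCrit
end

section
/- Let ρ ∈ M♭. Then the law of Q_∞ under P̂ has no atom at 1: P̂(Q_∞ = 1) = 0. -/
open MeasureTheory ProbabilityTheory Filter Set
open scoped Classical ENNReal NNReal ENat

namespace OrgCrit

/-! ### Auxiliary material for Statement 13 -/

/-- Partial sum `S_k = ∑_{j<k} y_{j+1} b^{-j}` of `Q_∞`. -/
noncomputable def Spart (b k : ℕ) (y : ℕ → ℝ) : ℝ :=
  ∑ j ∈ Finset.range k, y (j + 1) / (b : ℝ) ^ j

/-- The tail bound `ε_k = 2 b^{-k}`. -/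
noncomputable def epsQ (b k : ℕ) : ℝ := 2 * ((b : ℝ)⁻¹) ^ k

/-- The event `{S_k ∈ [1 - ε_k, 1]}`. -/
def AsetQ (b k : ℕ) : Set (ℕ → ℝ) :=
  {y | 1 - epsQ b k ≤ Spart b k y ∧ Spart b k y ≤ 1}

lemma measurable_Spart (b k : ℕ) : Measurable (Spart b k) := by
  apply Finset.measurable_sum
  intro j _
  exact (measurable_pi_apply (j + 1)).div_const _

lemma measurableSet_AsetQ (b k : ℕ) : MeasurableSet (AsetQ b k) :=
  ((measurableSet_le measurable_const (measurable_Spart b k)).inter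
    (measurableSet_le (measurable_Spart b k) measurable_const))

lemma measurable_Qnk (b : ℕ) (θ : ℝ) (n k : ℕ) :
    Measurable (fun y : ℕ → ℝ => Qnk b θ y n k) := by
  unfold Qnk
  apply Measurable.add_const
  apply Finset.measurable_sum
  intro j _
  exact (measurable_pi_apply (k + j)).div_const _

/-- The conditioning event of `P_n^{(θ)}`. -/
def condSet (b : ℕ) (θ : ℝ) (n : ℕ) : Set (ℕ → ℝ) :=
  {y | ∀ ℓ, 2 ≤ ℓ → ℓ ≤ n → 1 ≤ Qnk b θ y n ℓ}

lemma measurableSet_condSet (b : ℕ) (θ : ℝ) (n : ℕ) :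
    MeasurableSet (condSet b θ n) := by
  have : condSet b θ n =
      ⋂ (ℓ : ℕ) (_ : 2 ≤ ℓ) (_ : ℓ ≤ n), {y | 1 ≤ Qnk b θ y n ℓ} := by
    ext y; simp [condSet, Set.mem_iInter]
  rw [this]
  exact MeasurableSet.iInter fun ℓ => MeasurableSet.iInter fun _ =>
    MeasurableSet.iInter fun _ =>
      measurableSet_le measurable_const (measurable_Qnk b θ n ℓ)

lemma Qnk_congr {b : ℕ} {θ : ℝ} {y y' : ℕ → ℝ} {n k : ℕ}
    (hkn : k ≤ n) (h : ∀ i, k ≤ i → i ≤ n → y i = y' i) :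
    Qnk b θ y n k = Qnk b θ y' n k := by
  unfold Qnk
  congr 1
  refine Finset.sum_congr rfl fun j hj => ?_
  rw [Finset.mem_range] at hj
  rw [h (k + j) (Nat.le_add_right _ _) (by omega)]

lemma Spart_eq (b : ℕ) {k : ℕ} (hk : 1 ≤ k) (y : ℕ → ℝ) :
    Spart b k y = y 1 + ∑ j ∈ Finset.range (k - 1), y (j + 2) / (b : ℝ) ^ (j + 1) := by
  obtain ⟨m, rfl⟩ : ∃ m, k = m + 1 := ⟨k - 1, by omega⟩
  unfold Spart
  rw [Finset.sum_range_succ' (fun j => y (j + 1) / (b : ℝ) ^ j) m]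
  simp only [pow_zero, div_one, zero_add]
  rw [add_comm]
  norm_num

/-- Convergence of `P_n^{(θ)}`-probabilities of coordinate-determined events. -/
lemma tendsto_PnTheta_measure
    (b : ℕ) (P Phat : Measure (ℕ → ℝ)) (hPhat : IsLawQhat b P Phat)
    (k : ℕ) (A : Set (ℕ → ℝ)) (hA : MeasurableSet A)
    (hdep : ∀ y y' : ℕ → ℝ, (∀ i, 1 ≤ i → i ≤ k → y i = y' i) → (y ∈ A ↔ y' ∈ A)) :
    Tendsto (fun n : ℕ => ((PnTheta b P n 1) A).toReal) atTop
      (nhds ((Phat A).toReal)) := by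
  have hint : ∀ μ : Measure (ℕ → ℝ),
      ∫ y, A.indicator (fun _ => (1 : ℝ)) y ∂μ = (μ A).toReal := by
    intro μ; rw [integral_indicator_const _ hA]; simp [Measure.real]
  have h := hPhat.2 1 le_rfl k (A.indicator fun _ => (1 : ℝ))
    (measurable_const.indicator hA)
    ⟨1, fun y => by by_cases h : y ∈ A <;> simp [h]⟩
    (fun y y' h => by
      by_cases hy : y ∈ A
      · rw [Set.indicator_of_mem hy, Set.indicator_of_mem ((hdep y y' h).mp hy)]
      · rw [Set.indicator_of_notMem hy,
          Set.indicator_of_notMem (fun hy' => hy ((hdep y y' h).mpr hy'))])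
  simpa only [hint] using h

/-- Extension of a configuration on a finite index set by zero. -/
noncomputable def extJ (J : Finset ℕ) (z : J → ℝ) : ℕ → ℝ :=
  fun i => if h : i ∈ J then z ⟨i, h⟩ else 0

lemma measurable_extJ (J : Finset ℕ) : Measurable (extJ J) := by
  apply measurable_pi_lambda
  intro i
  by_cases h : i ∈ J
  · simp only [extJ, dif_pos h]
    exact measurable_pi_apply (⟨i, h⟩ : J)
  · simp only [extJ, dif_neg h]
    exact measurable_const

/-- The rest of the partial sum, beyond the first coordinate. -/
noncomputable def Rpart (b k : ℕ) (y : ℕ → ℝ) : ℝ :=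
  ∑ j ∈ Finset.range (k - 1), y (j + 2) / (b : ℝ) ^ (j + 1)

lemma measurable_Rpart (b k : ℕ) : Measurable (Rpart b k) := by
  apply Finset.measurable_sum
  intro j _
  exact (measurable_pi_apply (j + 2)).div_const _

lemma Rpart_congr {b k : ℕ} {y y' : ℕ → ℝ}
    (h : ∀ i, 2 ≤ i → i ≤ k → y i = y' i) : Rpart b k y = Rpart b k y' := by
  refine Finset.sum_congr rfl fun j hj => ?_
  rw [Finset.mem_range] at hj
  rw [h (j + 2) (by omega) (by omega)]

/-- Key bound: conditionally on the (coordinate-`1`-free) event defining `P_n^{(1)}`,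
the event `AsetQ b k` has probability at most `C ε_k`. -/
lemma PnTheta_AsetQ_le
    (b : ℕ) (ρ : Measure ℝ)
    (C : NNReal) (hC : ∀ s : Set ℝ, ρ s ≤ C * volume s)
    (P : Measure (ℕ → ℝ)) (hP : IsProjIID ρ P)
    (n k : ℕ) (hk : 1 ≤ k) :
    PnTheta b P n 1 (AsetQ b k) ≤ (C : ℝ≥0∞) * ENNReal.ofReal (epsQ b k) := by
  obtain ⟨hPprob, hPind, hPmap⟩ := hP
  set c : ℝ≥0∞ := (C : ℝ≥0∞) * ENNReal.ofReal (epsQ b k) with hc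
  set N := max n k with hN
  set J : Finset ℕ := Finset.Icc 2 N with hJ
  have h1J : (1 : ℕ) ∉ J := by simp [hJ]
  set g₂ : (ℕ → ℝ) → (J → ℝ) := fun a i => a i with hg₂def
  set g₁ : (ℕ → ℝ) → (({1} : Finset ℕ) → ℝ) := fun a i => a i with hg₁def
  have hg₂ : Measurable g₂ := measurable_pi_lambda _ fun i => measurable_pi_apply _
  have hg₁ : Measurable g₁ := measurable_pi_lambda _ fun i => measurable_pi_apply _
  have hindep : IndepFun g₂ g₁ P :=
    hPind.indepFun_finset J {1}
      (by rw [Finset.disjoint_singleton_right]; exact h1J)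
      (fun i => measurable_pi_apply i)
  have hmapprod : P.map (fun ω => (g₂ ω, g₁ ω)) = (P.map g₂).prod (P.map g₁) :=
    (indepFun_iff_map_prod_eq_prod_map_map hg₂.aemeasurable hg₁.aemeasurable).mp hindep
  set ext : (J → ℝ) → ℕ → ℝ := extJ J with hextdef
  have hext : Measurable ext := measurable_extJ J
  have hagree : ∀ ω : ℕ → ℝ, ∀ i, 2 ≤ i → i ≤ N → ext (g₂ ω) i = ω i := by
    intro ω i h2 hN'
    have hiJ : i ∈ J := by rw [hJ, Finset.mem_Icc]; exact ⟨h2, hN'⟩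
    simp only [hextdef, extJ, dif_pos hiJ]
    rfl
  have key1 : ∀ ω : ℕ → ℝ, (ext (g₂ ω) ∈ condSet b 1 n ↔ ω ∈ condSet b 1 n) := by
    intro ω
    unfold condSet
    simp only [Set.mem_setOf_eq]
    refine forall_congr' fun ℓ => ?_
    refine forall_congr' fun h2 => ?_
    refine forall_congr' fun hn => ?_
    rw [Qnk_congr hn (fun i hi1 hi2 =>
      hagree ω i (le_trans h2 hi1) (le_trans hi2 (le_max_left n k)))]
  have key2 : ∀ ω : ℕ → ℝ, Rpart b k (ext (g₂ ω)) = Rpart b k ω := by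
    intro ω
    exact Rpart_congr (fun i h2 hik => hagree ω i h2 (le_trans hik (le_max_right n k)))
  set j1 : ({1} : Finset ℕ) := ⟨1, Finset.mem_singleton_self 1⟩ with hj1
  set G : Set ((J → ℝ) × (({1} : Finset ℕ) → ℝ)) :=
    {p | ext p.1 ∈ condSet b 1 n ∧
      1 - epsQ b k - Rpart b k (ext p.1) ≤ p.2 j1 ∧
      p.2 j1 ≤ 1 - Rpart b k (ext p.1)} with hG
  have hGmeas : MeasurableSet G := by
    refine MeasurableSet.inter ?_ (MeasurableSet.inter ?_ ?_)
    · exact (hext.comp measurable_fst) (measurableSet_condSet b 1 n)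
    · exact measurableSet_le
        (measurable_const.sub ((measurable_Rpart b k).comp (hext.comp measurable_fst)))
        ((measurable_pi_apply j1).comp measurable_snd)
    · exact measurableSet_le
        ((measurable_pi_apply j1).comp measurable_snd)
        (measurable_const.sub ((measurable_Rpart b k).comp (hext.comp measurable_fst)))
  have hpre : condSet b 1 n ∩ AsetQ b k = (fun ω => (g₂ ω, g₁ ω)) ⁻¹' G := by
    ext ω
    have hSp : Spart b k ω = ω 1 + Rpart b k ω := Spart_eq b hk ω
    have hg1ω : g₁ ω j1 = ω 1 := rfl
    simp only [Set.mem_inter_iff, Set.mem_preimage, hG, Set.mem_setOf_eq, key1 ω, key2 ω,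
      hg1ω, AsetQ, hSp]
    constructor
    · rintro ⟨h1, h2, h3⟩; exact ⟨h1, by linarith, by linarith⟩
    · rintro ⟨h1, h2, h3⟩; exact ⟨h1, by linarith, by linarith⟩
  haveI : IsProbabilityMeasure (P.map g₁) := Measure.isProbabilityMeasure_map hg₁.aemeasurable
  haveI : IsProbabilityMeasure (P.map g₂) := Measure.isProbabilityMeasure_map hg₂.aemeasurable
  have hcondmeas : MeasurableSet {z : J → ℝ | ext z ∈ condSet b 1 n} :=
    hext (measurableSet_condSet b 1 n)
  have hinner : ∀ z : J → ℝ, (P.map g₁) (Prod.mk z ⁻¹' G) ≤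
      Set.indicator {z : J → ℝ | ext z ∈ condSet b 1 n} (fun _ => c) z := by
    intro z
    by_cases hz : ext z ∈ condSet b 1 n
    · rw [Set.indicator_of_mem (show z ∈ {z : J → ℝ | ext z ∈ condSet b 1 n} from hz)]
      have hset : Prod.mk z ⁻¹' G = (fun x : ({1} : Finset ℕ) → ℝ => x j1) ⁻¹'
          (Set.Icc (1 - epsQ b k - Rpart b k (ext z)) (1 - Rpart b k (ext z))) := by
        ext x
        simp only [Set.mem_preimage, hG, Set.mem_setOf_eq, Set.mem_Icc, hz, true_and]
      rw [hset, Measure.map_apply hg₁ ((measurable_pi_apply j1) measurableSet_Icc)]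
      have hset2 : g₁ ⁻¹' ((fun x : ({1} : Finset ℕ) → ℝ => x j1) ⁻¹'
          (Set.Icc (1 - epsQ b k - Rpart b k (ext z)) (1 - Rpart b k (ext z)))) =
          (fun ω : ℕ → ℝ => ω 1) ⁻¹'
          (Set.Icc (1 - epsQ b k - Rpart b k (ext z)) (1 - Rpart b k (ext z))) := rfl
      rw [hset2, ← Measure.map_apply (measurable_pi_apply 1) measurableSet_Icc, hPmap 1]
      calc ρ (Set.Icc (1 - epsQ b k - Rpart b k (ext z)) (1 - Rpart b k (ext z)))
          ≤ C * volume (Set.Icc (1 - epsQ b k - Rpart b k (ext z))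
              (1 - Rpart b k (ext z))) := hC _
        _ = c := by
            rw [Real.volume_Icc, hc]
            congr 1
            ring_nf
    · rw [Set.indicator_of_notMem
        (show z ∉ {z : J → ℝ | ext z ∈ condSet b 1 n} from hz)]
      have : Prod.mk z ⁻¹' G = ∅ := by
        ext x
        simp only [Set.mem_preimage, hG, Set.mem_setOf_eq, Set.mem_empty_iff_false,
          iff_false]
        exact fun h => hz h.1
      rw [this, measure_empty]
  have hsetfull : g₂ ⁻¹' {z : J → ℝ | ext z ∈ condSet b 1 n} = condSet b 1 n := by
    ext ω
    simp only [Set.mem_preimage, Set.mem_setOf_eq, key1 ω]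
  have hPsA : P (condSet b 1 n ∩ AsetQ b k) ≤ c * P (condSet b 1 n) := by
    calc P (condSet b 1 n ∩ AsetQ b k)
        = P.map (fun ω => (g₂ ω, g₁ ω)) G := by
          rw [Measure.map_apply (hg₂.prodMk hg₁) hGmeas, hpre]
      _ = ((P.map g₂).prod (P.map g₁)) G := by rw [hmapprod]
      _ = ∫⁻ z, (P.map g₁) (Prod.mk z ⁻¹' G) ∂(P.map g₂) := Measure.prod_apply hGmeas
      _ ≤ ∫⁻ z, Set.indicator {z : J → ℝ | ext z ∈ condSet b 1 n} (fun _ => c) z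
            ∂(P.map g₂) := lintegral_mono hinner
      _ = c * (P.map g₂) {z : J → ℝ | ext z ∈ condSet b 1 n} := by
          rw [lintegral_indicator_const hcondmeas]
      _ = c * P (condSet b 1 n) := by
          rw [Measure.map_apply hg₂ hcondmeas, hsetfull]
  have hPn : PnTheta b P n 1 (AsetQ b k) =
      (P (condSet b 1 n))⁻¹ * P (condSet b 1 n ∩ AsetQ b k) :=
    ProbabilityTheory.cond_apply (measurableSet_condSet b 1 n) P _
  rw [hPn]
  rcases eq_or_ne (P (condSet b 1 n)) 0 with h0 | h0
  · have : P (condSet b 1 n ∩ AsetQ b k) = 0 :=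
      measure_mono_null Set.inter_subset_left h0
    rw [this, mul_zero]
    exact zero_le
  · calc (P (condSet b 1 n))⁻¹ * P (condSet b 1 n ∩ AsetQ b k)
        ≤ (P (condSet b 1 n))⁻¹ * (c * P (condSet b 1 n)) := mul_le_mul_right hPsA _
      _ = c * ((P (condSet b 1 n))⁻¹ * P (condSet b 1 n)) := by ring
      _ = c := by rw [ENNReal.inv_mul_cancel h0 (measure_ne_top P _), mul_one]

lemma Spart_congr {b k : ℕ} {y y' : ℕ → ℝ}
    (h : ∀ i, 1 ≤ i → i ≤ k → y i = y' i) : Spart b k y = Spart b k y' := by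
  refine Finset.sum_congr rfl fun j hj => ?_
  rw [Finset.mem_range] at hj
  rw [h (j + 1) (by omega) (by omega)]

lemma cond_PnTheta (b : ℕ) (P : Measure (ℕ → ℝ)) (n : ℕ) (A : Set (ℕ → ℝ)) :
    PnTheta b P n 1 A = (P (condSet b 1 n))⁻¹ * P (condSet b 1 n ∩ A) :=
  ProbabilityTheory.cond_apply (measurableSet_condSet b 1 n) P A

/-- the law of `Q_∞` under `P̂` has no atom at `1`. -/
theorem Qinf_no_atom_at_one
    (b : ℕ) (hb : 2 ≤ b) (ρ : Measure ℝ) (hρ : MFlat b ρ)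
    (P : Measure (ℕ → ℝ)) (hP : IsProjIID ρ P)
    (Phat : Measure (ℕ → ℝ)) (hPhat : IsLawQhat b P Phat) :
    Phat {y | Qinf b y = 1} = 0 := by
  obtain ⟨hρprob, hρsupp, ⟨C, hC⟩, hρpos⟩ := hρ
  haveI : IsProbabilityMeasure Phat := hPhat.1
  have hb2 : (2 : ℝ) ≤ (b : ℝ) := by exact_mod_cast hb
  have hbpos : (0 : ℝ) < (b : ℝ) := by linarith
  have hinv1 : ((b : ℝ))⁻¹ < 1 := by
    rw [inv_lt_one_iff₀]; right; linarith
  have hinv0 : (0 : ℝ) ≤ ((b : ℝ))⁻¹ := by positivity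
  -- the bad set of configurations leaving `[0,1]`
  set Bad : Set (ℕ → ℝ) := ⋃ j : ℕ, {y : ℕ → ℝ | y (j + 1) ∉ Set.Icc (0 : ℝ) 1} with hBad
  have hUmeas : ∀ j : ℕ, MeasurableSet {y : ℕ → ℝ | y (j + 1) ∉ Set.Icc (0 : ℝ) 1} :=
    fun j => (measurable_pi_apply (j + 1)) measurableSet_Icc.compl
  have hPU : ∀ j : ℕ, P {y : ℕ → ℝ | y (j + 1) ∉ Set.Icc (0 : ℝ) 1} = 0 := by
    intro j
    have h1 : P ((fun y : ℕ → ℝ => y (j + 1)) ⁻¹' (Set.Icc (0 : ℝ) 1)ᶜ) =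
        ρ ((Set.Icc (0 : ℝ) 1)ᶜ) := by
      rw [← hP.2.2 (j + 1),
        Measure.map_apply (measurable_pi_apply (j + 1)) measurableSet_Icc.compl]
    have h2 : {y : ℕ → ℝ | y (j + 1) ∉ Set.Icc (0 : ℝ) 1} =
        (fun y : ℕ → ℝ => y (j + 1)) ⁻¹' (Set.Icc (0 : ℝ) 1)ᶜ := rfl
    rw [h2, h1, hρsupp]
  have hPhatU : ∀ j : ℕ, Phat {y : ℕ → ℝ | y (j + 1) ∉ Set.Icc (0 : ℝ) 1} = 0 := by
    intro j
    have htend := tendsto_PnTheta_measure b P Phat hPhat (j + 2)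
      {y : ℕ → ℝ | y (j + 1) ∉ Set.Icc (0 : ℝ) 1} (hUmeas j)
      (fun y y' h => by rw [Set.mem_setOf_eq, Set.mem_setOf_eq,
        h (j + 1) (by omega) (by omega)])
    have hzero : ∀ n : ℕ,
        ((PnTheta b P n 1) {y : ℕ → ℝ | y (j + 1) ∉ Set.Icc (0 : ℝ) 1}).toReal = 0 := by
      intro n
      rw [cond_PnTheta,
        measure_mono_null Set.inter_subset_right (hPU j), mul_zero]
      simp
    have h0 : Tendsto
        (fun n : ℕ => ((PnTheta b P n 1) {y : ℕ → ℝ | y (j + 1) ∉ Set.Icc (0 : ℝ) 1}).toReal)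
        atTop (nhds 0) := by
      simp only [hzero]; exact tendsto_const_nhds
    have hL := tendsto_nhds_unique htend h0
    rcases (ENNReal.toReal_eq_zero_iff _).mp hL with h | h
    · exact h
    · exact absurd h (measure_ne_top Phat _)
  have hBad0 : Phat Bad = 0 := measure_iUnion_null hPhatU
  -- inclusion in `AsetQ b k ∪ Bad`
  have hsub : ∀ k : ℕ, 1 ≤ k → {y : ℕ → ℝ | Qinf b y = 1} ⊆ AsetQ b k ∪ Bad := by
    intro k hk y hy
    by_cases hyB : y ∈ Bad
    · exact Or.inr hyB
    left
    have hyc : ∀ j : ℕ, y (j + 1) ∈ Set.Icc (0 : ℝ) 1 := by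
      intro j
      by_contra hcon
      exact hyB (Set.mem_iUnion.mpr ⟨j, hcon⟩)
    set f : ℕ → ℝ := fun j => y (j + 1) / (b : ℝ) ^ j with hf
    have hf0 : ∀ j, 0 ≤ f j := fun j => div_nonneg (hyc j).1 (by positivity)
    have hfle : ∀ j, f j ≤ ((b : ℝ)⁻¹) ^ j := by
      intro j
      have h1 : ((b : ℝ)⁻¹) ^ j = 1 / (b : ℝ) ^ j := by
        rw [inv_pow, inv_eq_one_div]
      rw [h1]
      show y (j + 1) / (b : ℝ) ^ j ≤ 1 / (b : ℝ) ^ j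
      gcongr
      exact (hyc j).2
    have hgeo : Summable (fun j : ℕ => ((b : ℝ)⁻¹) ^ j) :=
      summable_geometric_of_lt_one hinv0 hinv1
    have hsumf : Summable f := Summable.of_nonneg_of_le hf0 hfle hgeo
    have hsplit : (∑ j ∈ Finset.range k, f j) + ∑' j, f (j + k) = ∑' j, f j :=
      Summable.sum_add_tsum_nat_add k hsumf
    have hQ : (∑' j, f j) = 1 := hy
    have htail0 : 0 ≤ ∑' j, f (j + k) :=
      tsum_nonneg (fun j => hf0 (j + k))
    have hshiftgeo : Summable (fun j : ℕ => ((b : ℝ)⁻¹) ^ (j + k)) :=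
      (summable_nat_add_iff k).mpr hgeo
    have hshiftf : Summable (fun j : ℕ => f (j + k)) :=
      (summable_nat_add_iff k).mpr hsumf
    have htail1 : (∑' j, f (j + k)) ≤ ∑' j : ℕ, ((b : ℝ)⁻¹) ^ (j + k) :=
      Summable.tsum_le_tsum (fun j => hfle (j + k)) hshiftf hshiftgeo
    have hgeosum : (∑' j : ℕ, ((b : ℝ)⁻¹) ^ (j + k)) =
        (1 - (b : ℝ)⁻¹)⁻¹ * ((b : ℝ)⁻¹) ^ k := by
      simp only [pow_add]
      rw [tsum_mul_right, tsum_geometric_of_lt_one hinv0 hinv1, mul_comm]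
    have hinvhalf : ((b : ℝ))⁻¹ ≤ 1 / 2 := by
      rw [inv_le_comm₀ hbpos (by norm_num)]
      linarith
    have hcoef : (1 - (b : ℝ)⁻¹)⁻¹ ≤ 2 := by
      rw [inv_le_comm₀ (by linarith) (by norm_num)]
      linarith
    have htail2 : (∑' j, f (j + k)) ≤ epsQ b k := by
      calc (∑' j, f (j + k)) ≤ (1 - (b : ℝ)⁻¹)⁻¹ * ((b : ℝ)⁻¹) ^ k := by
            rw [← hgeosum]; exact htail1
        _ ≤ 2 * ((b : ℝ)⁻¹) ^ k := by
            apply mul_le_mul_of_nonneg_right hcoef (by positivity)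
        _ = epsQ b k := rfl
    have hSp : Spart b k y = 1 - ∑' j, f (j + k) := by
      have : Spart b k y = ∑ j ∈ Finset.range k, f j := rfl
      rw [this]
      linarith [hsplit, hQ]
    constructor
    · rw [hSp]; unfold epsQ at htail2 ⊢; linarith
    · rw [hSp]; linarith
  -- the bound for each k
  have hbound : ∀ k : ℕ, 1 ≤ k →
      Phat {y | Qinf b y = 1} ≤ (C : ℝ≥0∞) * ENNReal.ofReal (epsQ b k) := by
    intro k hk
    have htend := tendsto_PnTheta_measure b P Phat hPhat k (AsetQ b k)
      (measurableSet_AsetQ b k)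
      (fun y y' h => by
        constructor
        · rintro ⟨h1, h2⟩
          exact ⟨by rw [← Spart_congr h]; exact h1, by rw [← Spart_congr h]; exact h2⟩
        · rintro ⟨h1, h2⟩
          exact ⟨by rw [Spart_congr h]; exact h1, by rw [Spart_congr h]; exact h2⟩)
    have hfin : ((C : ℝ≥0∞) * ENNReal.ofReal (epsQ b k)) ≠ ⊤ :=
      ENNReal.mul_ne_top ENNReal.coe_ne_top ENNReal.ofReal_ne_top
    have hterm : ∀ n : ℕ, ((PnTheta b P n 1) (AsetQ b k)).toReal ≤
        ((C : ℝ≥0∞) * ENNReal.ofReal (epsQ b k)).toReal := by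
      intro n
      exact ENNReal.toReal_mono hfin
        (PnTheta_AsetQ_le b ρ C hC P ⟨hP.1, hP.2.1, hP.2.2⟩ n k hk)
    have hlim : ((Phat (AsetQ b k)).toReal) ≤
        ((C : ℝ≥0∞) * ENNReal.ofReal (epsQ b k)).toReal :=
      le_of_tendsto htend (Filter.Eventually.of_forall hterm)
    have hA : Phat (AsetQ b k) ≤ (C : ℝ≥0∞) * ENNReal.ofReal (epsQ b k) :=
      (ENNReal.toReal_le_toReal (measure_ne_top Phat _) hfin).mp hlim
    calc Phat {y | Qinf b y = 1}
        ≤ Phat (AsetQ b k ∪ Bad) := measure_mono (hsub k hk)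
      _ ≤ Phat (AsetQ b k) + Phat Bad := measure_union_le _ _
      _ = Phat (AsetQ b k) := by rw [hBad0, add_zero]
      _ ≤ _ := hA
  -- pass to the limit k → ∞
  have heps : Tendsto (fun k : ℕ => epsQ b k) atTop (nhds 0) := by
    have := tendsto_pow_atTop_nhds_zero_of_lt_one hinv0 hinv1
    have h2 := this.const_mul (2 : ℝ)
    simpa [epsQ] using h2
  have hofReal : Tendsto (fun k : ℕ => ENNReal.ofReal (epsQ b k)) atTop (nhds 0) := by
    rw [← ENNReal.ofReal_zero]
    exact (ENNReal.continuous_ofReal.continuousAt).tendsto.comp heps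
  have htends : Tendsto (fun k : ℕ => (C : ℝ≥0∞) * ENNReal.ofReal (epsQ b k)) atTop
      (nhds 0) := by
    have := ENNReal.Tendsto.const_mul hofReal
      (Or.inr (ENNReal.coe_ne_top : (C : ℝ≥0∞) ≠ ⊤))
    simpa using this
  refine le_antisymm ?_ (zero_le)
  exact ge_of_tendsto htends (eventually_atTop.mpr ⟨1, fun k hk => hbound k hk⟩)

end OrgCrit
end
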